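/- arXiv:1403.3323 — 4 statements merged into one kernel-verified Lean document; each statement's English description precedes it below -/
import Mathlib

section
/- Let n, m, l be positive integers and k_1, ..., k_l integers with 0 < k_1 < k_2 < ... < k_l ≤ n/2. The generating function Σ_P w(P) over all families P = (P_1, ..., P_m, P_{1⁺}, ..., P_{l⁺}) of non-intersecting lattice paths, where for 1 ≤ s ≤ m the path P_s runs from A_s = (s, −s+1) to E_s = (n+s, n−s+1), for 1 ≤ t ≤ l the path P_{t⁺} runs from B_{t⁺} = (k_t+1, k_t) to E_t = (n−k_t+1, n−k_t), no path ever crossing above the main diagonal x = y, and where the weight of a family P is w(P) = 2^{T(P)} with T(P) the number of touching points of the paths of P with the main diagonal, equals det(N), where N is the matrix with rows and columns indexed by {1, ..., m, 1⁺, ..., l⁺} and entries: N_{i,j} = C(2n, n+j−i) + C(2n, n−i−j+1) for 1 ≤ i, j ≤ m; N_{i,t⁺} = C(2n−2k_t, n−k_t−i+1) + C(2n−2k_t, n−k_t−i) for 1 ≤ i ≤ m; N_{t⁺,j} = C(2n−2k_t, n−k_t−j+1) + C(2n−2k_t, n−k_t−j) for 1 ≤ j ≤ m; and N_{t⁺,t̂⁺}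 = C(2n−2k_t−2k_{t̂}, n−k_t−k_{t̂}) + C(2n−2k_t−2k_{t̂}, n−k_t−k_{t̂}−1) for 1 ≤ t, t̂ ≤ l. -/
/-- Binomial coefficient `C(p,q)` for integers, equal to `0` unless `0 ≤ q ≤ p`. -/
def ch (p q : ℤ) : ℤ := if 0 ≤ q ∧ q ≤ p then (p.toNat).choose q.toNat else 0

/-- Sum `Σ_{r=a}^{b} f r` with the signed convention: the usual sum if `a ≤ b`,
`0` if `b = a - 1`, and `-Σ_{r=b+1}^{a-1} f r` if `b < a - 1`. -/
noncomputable def ssum (a b : ℤ) (f : ℤ → ℤ) : ℤ :=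
  if a ≤ b then ∑ r ∈ Finset.Icc a b, f r else -∑ r ∈ Finset.Icc (b + 1) (a - 1), f r

/-- A lattice path in `ℤ²`: a nonempty list of lattice points in which each consecutive
step is a unit step to the right or up. -/
def IsLP (P : List (ℤ × ℤ)) : Prop :=
  P ≠ [] ∧ P.Chain' (fun p q => q = (p.1 + 1, p.2) ∨ q = (p.1, p.2 + 1))

/-- The index set for the families of lattice paths of Proposition 3.4: the indices
`1, …, m` followed by `1⁺, …, l⁺`. -/
abbrev QIdx (m l : ℕ) : Type := Fin m ⊕ Fin l

/-- Starting points `A s = (s, -s+1)` for `s = 1, …, m` and `B t⁺ = (k t + 1, k t)`. -/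
def startPt4 (m l : ℕ) (k : Fin l → ℤ) : QIdx m l → ℤ × ℤ
  | Sum.inl s => ((s : ℤ) + 1, -(s : ℤ))
  | Sum.inr t => (k t + 1, k t)

/-- Ending points `E s = (n+s, n-s+1)` for `s = 1, …, m` and
`E t = (n - k t + 1, n - k t)`. -/
def endPt4 (n m l : ℕ) (k : Fin l → ℤ) : QIdx m l → ℤ × ℤ
  | Sum.inl s => ((n : ℤ) + s + 1, (n : ℤ) - s)
  | Sum.inr t => ((n : ℤ) - k t + 1, (n : ℤ) - k t)

/-- The set of families of non-intersecting lattice paths from the `A`'s and `B`'s to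
the `E`'s, never crossing above the main diagonal `x = y`. -/
def Fam4 (n m l : ℕ) (k : Fin l → ℤ) : Set (QIdx m l → List (ℤ × ℤ)) :=
  {F | (∀ i, IsLP (F i) ∧ (F i).head? = some (startPt4 m l k i) ∧
          (F i).getLast? = some (endPt4 n m l k i) ∧ ∀ p ∈ F i, p.2 ≤ p.1) ∧
       ∀ i j, i ≠ j → ∀ p ∈ F i, p ∉ F j}

/-- The total number of touching points of the paths of the family `F` with the main
diagonal `x = y`. -/
def touchCount {m l : ℕ} (F : QIdx m l → List (ℤ × ℤ)) : ℕ :=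
  ∑ i : QIdx m l, (F i).countP (fun p => decide (p.2 = p.1))

/-- The matrix `N` of Proposition 3.4, with rows and columns indexed by
`{1, …, m} ⊕ {1⁺, …, l⁺}`. -/
def Nmat (n m l : ℕ) (k : Fin l → ℤ) :
    Matrix (Fin m ⊕ Fin l) (Fin m ⊕ Fin l) ℤ :=
  fun i j =>
    match i, j with
    | Sum.inl p, Sum.inl q =>
        ch (2 * (n : ℤ)) ((n : ℤ) + ((q : ℤ) + 1) - ((p : ℤ) + 1))
          + ch (2 * (n : ℤ)) ((n : ℤ) - ((p : ℤ) + 1) - ((q : ℤ) + 1) + 1)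
    | Sum.inl p, Sum.inr t =>
        ch (2 * (n : ℤ) - 2 * k t) ((n : ℤ) - k t - ((p : ℤ) + 1) + 1)
          + ch (2 * (n : ℤ) - 2 * k t) ((n : ℤ) - k t - ((p : ℤ) + 1))
    | Sum.inr t, Sum.inl q =>
        ch (2 * (n : ℤ) - 2 * k t) ((n : ℤ) - k t - ((q : ℤ) + 1) + 1)
          + ch (2 * (n : ℤ) - 2 * k t) ((n : ℤ) - k t - ((q : ℤ) + 1))
    | Sum.inr t, Sum.inr t' =>
        ch (2 * (n : ℤ) - 2 * k t - 2 * k t') ((n : ℤ) - k t - k t')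
          + ch (2 * (n : ℤ) - 2 * k t - 2 * k t') ((n : ℤ) - k t - k t' - 1)

-- ====== auxiliary development ======
set_option maxHeartbeats 1600000

lemma ch_neg {p q : ℤ} (h : q < 0) : ch p q = 0 := by
  simp [ch]; intro h1; omega

lemma ch_gt {p q : ℤ} (h : p < q) : ch p q = 0 := by
  simp [ch]; intro h1; omega

lemma ch_self {p : ℤ} (h : 0 ≤ p) : ch p p = 1 := by
  simp [ch, h]

lemma ch_zero {p : ℤ} (h : 0 ≤ p) : ch p 0 = 1 := by
  simp [ch, h]

lemma ch_symm (p q : ℤ) : ch p q = ch p (p - q) := by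
  unfold ch
  by_cases h : 0 ≤ q ∧ q ≤ p
  · rw [if_pos h, if_pos ⟨by omega, by omega⟩]
    rw [show (p-q).toNat = p.toNat - q.toNat by omega, Nat.choose_symm (by omega)]
  · rw [if_neg h]
    by_cases h2 : 0 ≤ p - q ∧ p - q ≤ p
    · exfalso; omega
    · rw [if_neg h2]

lemma ch_pascal {p : ℤ} (q : ℤ) (hp : 1 ≤ p) :
    ch p q = ch (p-1) (q-1) + ch (p-1) q := by
  unfold ch
  by_cases h0 : q < 0
  · rw [if_neg (by omega), if_neg (by omega), if_neg (by omega)]; ring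
  by_cases h1 : q = 0
  · subst h1
    rw [if_pos ⟨le_refl _, by omega⟩, if_neg (by omega), if_pos ⟨le_refl _, by omega⟩]
    simp
  by_cases h2 : p < q
  · rw [if_neg (by omega), if_neg (by omega), if_neg (by omega)]; ring
  · -- 1 ≤ q ≤ p
    rw [if_pos ⟨by omega, by omega⟩, if_pos ⟨by omega, by omega⟩]
    by_cases h3 : q = p
    · subst h3
      rw [if_neg (by omega)]
      simp [Nat.choose_self, Nat.choose_succ_self]
    · rw [if_pos ⟨by omega, by omega⟩]
      rw [show p.toNat = (p-1).toNat + 1 by omega, show q.toNat = (q-1).toNat + 1 by omega]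
      simp only [Nat.choose_succ_succ, Nat.succ_eq_add_one]
      rw [show (q-1).toNat + 1 = q.toNat by omega]
      push_cast
      ring

def lev (p : ℤ × ℤ) : ℤ := p.1 + p.2

def PB (u v : ℤ × ℤ) : Set (List (ℤ × ℤ)) :=
  {P | IsLP P ∧ P.head? = some u ∧ P.getLast? = some v ∧ ∀ p ∈ P, p.2 ≤ p.1}

namespace LP

def dp : ℤ × ℤ := (0, 0)

lemma step {P : List (ℤ × ℤ)} (hP : IsLP P) {i : ℕ} (hi : i + 1 < P.length) :
    P.getD (i+1) dp = ((P.getD i dp).1 + 1, (P.getD i dp).2) ∨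
    P.getD (i+1) dp = ((P.getD i dp).1, (P.getD i dp).2 + 1) := by
  have h := (List.isChain_iff_getElem.mp hP.2) i (by omega)
  rw [List.getD_eq_getElem _ _ (by omega), List.getD_eq_getElem _ _ (by omega)]
  exact h

lemma lev_step {P : List (ℤ × ℤ)} (hP : IsLP P) {i : ℕ} (hi : i + 1 < P.length) :
    lev (P.getD (i+1) dp) = lev (P.getD i dp) + 1 := by
  rcases step hP hi with h | h <;> rw [h] <;> simp only [lev] <;> ring

lemma lev_getD {P : List (ℤ × ℤ)} (hP : IsLP P) :
    ∀ i, i < P.length → lev (P.getD i dp) = lev (P.getD 0 dp) + i := by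
  intro i
  induction i with
  | zero => simp
  | succ n ih => intro h; rw [lev_step hP h, ih (by omega)]; push_cast; ring

lemma x_mono {P : List (ℤ × ℤ)} (hP : IsLP P) :
    ∀ i j, i ≤ j → j < P.length → (P.getD i dp).1 ≤ (P.getD j dp).1 := by
  intro i j hij hj
  induction j with
  | zero => simp_all
  | succ n ih =>
    rcases Nat.eq_or_lt_of_le hij with h | h
    · rw [h]
    · have := ih (by omega) (by omega)
      rcases step hP hj with hs | hs <;> rw [hs] <;> dsimp <;> omega

lemma y_mono {P : List (ℤ × ℤ)} (hP : IsLP P) :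
    ∀ i j, i ≤ j → j < P.length → (P.getD i dp).2 ≤ (P.getD j dp).2 := by
  intro i j hij hj
  induction j with
  | zero => simp_all
  | succ n ih =>
    rcases Nat.eq_or_lt_of_le hij with h | h
    · rw [h]
    · have := ih (by omega) (by omega)
      rcases step hP hj with hs | hs <;> rw [hs] <;> dsimp <;> omega

lemma getD_zero {P : List (ℤ × ℤ)} {u : ℤ × ℤ} (h : P.head? = some u) :
    P.getD 0 dp = u := by
  cases P with
  | nil => simp at h
  | cons a t => simp at h; simp [h]

lemma getD_last {P : List (ℤ × ℤ)} {v : ℤ × ℤ} (hne : P ≠ []) (h : P.getLast? = some v) :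
    P.getD (P.length - 1) dp = v := by
  have hlen : 0 < P.length := List.length_pos_iff.mpr hne
  rw [List.getD_eq_getElem _ _ (by omega)]
  rw [← List.getLast_eq_getElem hne]
  rwa [List.getLast?_eq_getLast hne, Option.some_inj] at h

lemma mem_iff_getD {P : List (ℤ × ℤ)} {p : ℤ × ℤ} :
    p ∈ P ↔ ∃ i, i < P.length ∧ P.getD i dp = p := by
  rw [List.mem_iff_get]
  constructor
  · rintro ⟨⟨i, hi⟩, h⟩; exact ⟨i, hi, by rw [List.getD_eq_getElem _ _ hi]; exact h⟩
  · rintro ⟨i, hi, h⟩; exact ⟨⟨i, hi⟩, by rw [← h, List.getD_eq_getElem _ _ hi]; rfl⟩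

lemma length_eq {P : List (ℤ × ℤ)} {u v : ℤ × ℤ} (hP : P ∈ PB u v) :
    lev u ≤ lev v ∧ P.length = (lev v - lev u).toNat + 1 := by
  obtain ⟨h1, h2, h3, _⟩ := hP
  have hne := h1.1
  have hlen : 0 < P.length := List.length_pos_iff.mpr hne
  have := lev_getD h1 (P.length - 1) (by omega)
  rw [getD_last hne h3, getD_zero h2] at this
  omega

lemma eq_of_lev_x {p q : ℤ × ℤ} (h1 : lev p = lev q) (h2 : p.1 = q.1) : p = q := by
  unfold lev at h1; ext; exact h2; omega


-- BEGIN PART 3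

lemma getLast?_cons_ne {α : Type*} {a : α} {P : List α} (h : P ≠ []) :
    (a :: P).getLast? = P.getLast? := by
  cases P with
  | nil => simp at h
  | cons b t => exact List.getLast?_cons_cons ..

lemma nodup {P : List (ℤ × ℤ)} (hP : IsLP P) : P.Nodup := by
  rw [List.nodup_iff_injective_get]
  rintro ⟨i, hi⟩ ⟨j, hj⟩ h
  have h1 := lev_getD hP i hi
  have h2 := lev_getD hP j hj
  rw [List.getD_eq_getElem _ _ hi] at h1
  rw [List.getD_eq_getElem _ _ hj] at h2
  simp only [List.get_eq_getElem, Fin.val_mk] at h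
  rw [h] at h1
  have : i = j := by omega
  subst this
  rfl

lemma PB_coords {P : List (ℤ × ℤ)} {u v : ℤ × ℤ} (hP : P ∈ PB u v) :
    u.1 ≤ v.1 ∧ u.2 ≤ v.2 ∧ u.2 ≤ u.1 ∧ v.2 ≤ v.1 := by
  obtain ⟨h1, h2, h3, h4⟩ := hP
  have hne := h1.1
  have hlen : 0 < P.length := List.length_pos_iff.mpr hne
  have hx := x_mono h1 0 (P.length - 1) (by omega) (by omega)
  have hy := y_mono h1 0 (P.length - 1) (by omega) (by omega)
  rw [getD_zero h2, getD_last hne h3] at hx hy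
  have hu : u ∈ P := by
    rw [mem_iff_getD]; exact ⟨0, hlen, getD_zero h2⟩
  have hv : v ∈ P := by
    rw [mem_iff_getD]; exact ⟨P.length - 1, by omega, getD_last hne h3⟩
  exact ⟨hx, hy, h4 u hu, h4 v hv⟩

lemma PB_empty_of {u v : ℤ × ℤ} (h : v.1 < u.1 ∨ v.2 < u.2 ∨ u.1 < u.2) :
    PB u v = ∅ := by
  ext P; simp only [Set.mem_empty_iff_false, iff_false]
  intro hP
  have := PB_coords hP
  omega

lemma PB_empty_of' {u v : ℤ × ℤ} (hne : u ≠ v) (h : lev v ≤ lev u) : PB u v = ∅ := by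
  ext P; simp only [Set.mem_empty_iff_false, iff_false]
  intro hP
  have h1 := length_eq hP
  have h2 : P.length = 1 := by omega
  obtain ⟨q, hq⟩ := List.length_eq_one_iff.mp h2
  obtain ⟨hl, hh, hg, _⟩ := hP
  subst hq
  simp at hh hg
  exact hne (hh.symm.trans hg)

lemma PB_self {u : ℤ × ℤ} (hd : u.2 ≤ u.1) : PB u u = {[u]} := by
  ext P
  constructor
  · intro hP
    have h1 := length_eq hP
    have h2 : P.length = 1 := by omega
    obtain ⟨q, hq⟩ := List.length_eq_one_iff.mp h2
    obtain ⟨hl, hh, hg, _⟩ := hP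
    subst hq
    simp at hh ⊢
    exact hh
  · rintro rfl
    exact ⟨⟨by simp, List.isChain_singleton _⟩, by simp, by simp, by simpa using hd⟩

lemma PB_split {u v : ℤ × ℤ} (hne : u ≠ v) (hd : u.2 ≤ u.1) :
    PB u v = (List.cons u) '' (PB (u.1 + 1, u.2) v ∪ PB (u.1, u.2 + 1) v) := by
  ext P
  constructor
  · intro hP
    have hlev := length_eq hP
    obtain ⟨hl, hh, hg, hb⟩ := hP
    have hlen : 2 ≤ P.length := by
      rcases Nat.lt_or_ge P.length 2 with h | h
      · exfalso
        have h2 : P.length = 1 := by have := List.length_pos_iff.mpr hl.1; omega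
        obtain ⟨q, hq⟩ := List.length_eq_one_iff.mp h2
        subst hq; simp at hh hg; exact hne (hh.symm.trans hg)
      · exact h
    obtain ⟨a, P', rfl⟩ : ∃ a P', P = a :: P' := by
      cases P with | nil => simp at hlen | cons a P' => exact ⟨a, P', rfl⟩
    have ha : a = u := by simpa using hh
    subst ha
    have hP'ne : P' ≠ [] := by
      intro h; rw [h] at hlen; simp at hlen
    obtain ⟨b, P'', rfl⟩ : ∃ b P'', P' = b :: P'' := by
      cases P' with | nil => simp at hP'ne | cons b P'' => exact ⟨b, P'', rfl⟩
    have hchain := hl.2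
    rw [List.Chain', List.isChain_cons_cons] at hchain
    have hrel := hchain.1
    have hP' : (b :: P'') ∈ PB b v := by
      refine ⟨⟨by simp, hchain.2⟩, by simp, ?_, fun p hp => hb p (by simp [hp])⟩
      · rw [← hg]; symm; exact List.getLast?_cons_cons ..
    refine (Set.mem_image _ _ _).mpr ⟨b :: P'', ?_, rfl⟩
    rcases hrel with h | h
    · left; rwa [← h]
    · right; rwa [← h]
  · rintro ⟨P', hP', rfl⟩
    have key : ∀ w, w = (u.1 + 1, u.2) ∨ w = (u.1, u.2 + 1) → P' ∈ PB w v → u :: P' ∈ PB u v := by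
      rintro w hw ⟨hl, hh, hg, hb⟩
      have hP'ne := hl.1
      refine ⟨⟨by simp, ?_⟩, by simp, ?_, ?_⟩
      · rw [List.Chain', List.isChain_cons]
        refine ⟨?_, hl.2⟩
        intro y hy
        rw [hh] at hy
        simp at hy
        subst hy
        rcases hw with h | h
        · left; rw [h]
        · right; rw [h]
      · rwa [getLast?_cons_ne hP'ne]
      · intro p hp
        rcases List.mem_cons.mp hp with h | h
        · subst h; exact hd
        · exact hb p h
    rcases hP' with h | h
    · exact key _ (Or.inl rfl) h
    · exact key _ (Or.inr rfl) h

lemma PB_finite (u v : ℤ × ℤ) : (PB u v).Finite := by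
  have main : ∀ (N : ℕ) (u : ℤ × ℤ), (lev v - lev u).toNat ≤ N → (PB u v).Finite := by
    intro N
    induction N with
    | zero =>
      intro u hN
      by_cases h : u = v
      · subst h
        by_cases hd : u.2 ≤ u.1
        · rw [PB_self hd]; exact Set.finite_singleton _
        · rw [PB_empty_of (by omega)]; exact Set.finite_empty
      · rw [PB_empty_of' h (by omega)]; exact Set.finite_empty
    | succ n ih =>
      intro u hN
      by_cases h : u = v
      · subst h
        by_cases hd : u.2 ≤ u.1
        · rw [PB_self hd]; exact Set.finite_singleton _
        · rw [PB_empty_of (by omega)]; exact Set.finite_empty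
      by_cases hd : u.2 ≤ u.1
      · by_cases hlev : lev v ≤ lev u
        · rw [PB_empty_of' h hlev]; exact Set.finite_empty
        · rw [PB_split h hd]
          apply Set.Finite.image
          apply Set.Finite.union
          · exact ih _ (by simp only [lev] at *; omega)
          · exact ih _ (by simp only [lev] at *; omega)
      · rw [PB_empty_of (by omega)]; exact Set.finite_empty
  exact main (lev v - lev u).toNat u le_rfl

noncomputable def PBF (u v : ℤ × ℤ) : Finset (List (ℤ × ℤ)) := (PB_finite u v).toFinset

def pw (P : List (ℤ × ℤ)) : ℤ := 2 ^ (P.countP (fun p => decide (p.2 = p.1)))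

noncomputable def Wt (u v : ℤ × ℤ) : ℤ := ∑ P ∈ PBF u v, pw P

lemma PBF_eq_empty {u v : ℤ × ℤ} (h : PB u v = ∅) : PBF u v = ∅ := by
  unfold PBF
  rw [Set.Finite.toFinset_eq_empty]
  exact h

lemma Wt_of_empty {u v : ℤ × ℤ} (h : PB u v = ∅) : Wt u v = 0 := by
  unfold Wt
  rw [PBF_eq_empty h]
  simp

lemma pw_cons (a : ℤ × ℤ) (P : List (ℤ × ℤ)) :
    pw (a :: P) = (if a.2 = a.1 then 2 else 1) * pw P := by
  unfold pw
  rw [List.countP_cons]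
  by_cases h : a.2 = a.1 <;> simp [h, pow_succ] <;> ring

lemma Wt_self {u : ℤ × ℤ} (hd : u.2 ≤ u.1) :
    Wt u u = if u.2 = u.1 then 2 else 1 := by
  unfold Wt
  have h : PBF u u = {[u]} := by
    ext P
    simp only [PBF, Set.Finite.mem_toFinset, PB_self hd, Set.mem_singleton_iff,
      Finset.mem_singleton]
  rw [h, Finset.sum_singleton]
  unfold pw
  by_cases hu : u.2 = u.1 <;> simp [hu]

lemma Wt_split {u v : ℤ × ℤ} (hne : u ≠ v) (hd : u.2 ≤ u.1) :
    Wt u v = (if u.2 = u.1 then 2 else 1) *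
      (Wt (u.1 + 1, u.2) v + Wt (u.1, u.2 + 1) v) := by
  classical
  have himg : PBF u v = Finset.image (List.cons u)
      (PBF (u.1 + 1, u.2) v ∪ PBF (u.1, u.2 + 1) v) := by
    ext P
    simp only [PBF, Set.Finite.mem_toFinset, Finset.mem_image, Finset.mem_union,
      PB_split hne hd, Set.mem_image, Set.mem_union]
    try tauto
  unfold Wt
  rw [himg, Finset.sum_image (by intro x _ y _ h; injection h)]
  rw [Finset.sum_union ?disj]
  case disj =>
    rw [Finset.disjoint_left]
    intro P hP1 hP2
    simp only [PBF, Set.Finite.mem_toFinset] at hP1 hP2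
    have e1 := hP1.2.1
    have e2 := hP2.2.1
    rw [e1] at e2
    simp at e2
    try omega
  rw [show ∀ s : Finset (List (ℤ × ℤ)), ∑ P ∈ s, pw (u :: P)
        = (if u.2 = u.1 then 2 else 1) * ∑ P ∈ s, pw P from
      fun s => by rw [Finset.mul_sum]; exact Finset.sum_congr rfl fun P _ => pw_cons u P,
    show ∀ s : Finset (List (ℤ × ℤ)), ∑ P ∈ s, pw (u :: P)
        = (if u.2 = u.1 then 2 else 1) * ∑ P ∈ s, pw P from
      fun s => by rw [Finset.mul_sum]; exact Finset.sum_congr rfl fun P _ => pw_cons u P]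
  ring

lemma Wt_formula_out {u v : ℤ × ℤ} (h1 : u.2 ≤ u.1) (h2 : v.2 ≤ v.1)
    (hout : v.1 < u.1 ∨ v.2 < u.2) :
    Wt u v = ch (lev v - lev u) (v.1 - u.1) + ch (lev v - lev u) (v.1 - u.2) := by
  rcases hout with h | h
  · rw [Wt_of_empty (PB_empty_of (by omega))]
    rw [ch_neg (by omega), ch_gt (by simp only [lev]; omega)]
    ring
  · rw [Wt_of_empty (PB_empty_of (by omega))]
    rw [ch_gt (by simp only [lev]; omega), ch_gt (by simp only [lev]; omega)]
    ring

theorem Wt_formula {u v : ℤ × ℤ} (h1 : u.2 ≤ u.1) (h2 : v.2 ≤ v.1) :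
    Wt u v = ch (lev v - lev u) (v.1 - u.1) + ch (lev v - lev u) (v.1 - u.2) := by
  have main : ∀ (N : ℕ) (u : ℤ × ℤ), (lev v - lev u).toNat ≤ N → u.2 ≤ u.1 →
      Wt u v = ch (lev v - lev u) (v.1 - u.1) + ch (lev v - lev u) (v.1 - u.2) := by
    intro N
    induction N with
    | zero =>
      intro u hN h1
      by_cases hout : v.1 < u.1 ∨ v.2 < u.2
      · exact Wt_formula_out h1 h2 hout
      · push_neg at hout
        have huv : u = v := by
          have : lev v - lev u ≤ 0 := by omega
          simp only [lev] at this
          ext <;> omega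
        subst huv
        rw [Wt_self h1]
        simp only [lev, sub_self]
        by_cases hu : u.2 = u.1
        · rw [if_pos hu, ch_zero le_rfl, show u.1 - u.2 = 0 by omega, ch_zero le_rfl]; ring
        · rw [if_neg hu, ch_zero le_rfl, ch_gt (by omega)]; ring
    | succ n ih =>
      intro u hN h1
      by_cases hout : v.1 < u.1 ∨ v.2 < u.2
      · exact Wt_formula_out h1 h2 hout
      push_neg at hout
      by_cases huv : u = v
      · subst huv
        rw [Wt_self h1]
        simp only [lev, sub_self]
        by_cases hu : u.2 = u.1
        · rw [if_pos hu, ch_zero le_rfl, show u.1 - u.2 = 0 by omega, ch_zero le_rfl]; ring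
        · rw [if_neg hu, ch_zero le_rfl, ch_gt (by omega)]; ring
      -- main case
      have hne2 : u.1 ≠ v.1 ∨ u.2 ≠ v.2 := by
        by_contra hc
        push_neg at hc
        exact huv (Prod.ext hc.1 hc.2)
      have hT : 1 ≤ lev v - lev u := by
        rcases hne2 with h | h <;> (simp only [lev]; omega)
      have hlev : ∀ w : ℤ × ℤ, lev w = w.1 + w.2 := fun w => rfl
      rw [Wt_split huv h1]
      by_cases hdiag : u.2 = u.1
      · -- on the diagonal
        have hup : Wt (u.1, u.2 + 1) v = 0 :=
          Wt_of_empty (PB_empty_of (by right; right; simp; omega))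
        have hlt : u.1 < v.1 := by
          rcases hne2 with h | h <;> omega
        have hr := ih (u.1 + 1, u.2) (by simp only [lev] at *; omega) (by simp; omega)
        rw [hup, hr, if_pos hdiag]
        simp only [lev] at *
        conv_rhs => rw [ch_pascal (p := v.1 + v.2 - (u.1 + u.2)) (v.1 - u.1) (by omega),
          ch_pascal (p := v.1 + v.2 - (u.1 + u.2)) (v.1 - u.2) (by omega)]
        rw [show v.1 + v.2 - (u.1 + 1 + u.2) = v.1 + v.2 - (u.1 + u.2) - 1 by ring,
          show v.1 - (u.1 + 1) = v.1 - u.1 - 1 by ring]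
        rw [hdiag]
        ring
      · -- strictly below the diagonal
        have hd2 : u.2 < u.1 := by omega
        have hr : Wt (u.1 + 1, u.2) v
            = ch (lev v - lev u - 1) (v.1 - u.1 - 1) + ch (lev v - lev u - 1) (v.1 - u.2) := by
          by_cases hx : u.1 < v.1
          · have := ih (u.1 + 1, u.2) (by simp only [lev] at *; omega) (by simp; omega)
            rw [this]
            simp only [lev]
            rw [show v.1 + v.2 - (u.1 + 1 + u.2) = v.1 + v.2 - (u.1 + u.2) - 1 by ring,
              show v.1 - (u.1 + 1) = v.1 - u.1 - 1 by ring]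
          · have hx1 : u.1 = v.1 := by omega
            rw [Wt_of_empty (PB_empty_of (by left; simp; omega))]
            rw [ch_neg (by omega), ch_gt (by simp only [lev]; omega)]
            ring
        have hu : Wt (u.1, u.2 + 1) v
            = ch (lev v - lev u - 1) (v.1 - u.1) + ch (lev v - lev u - 1) (v.1 - u.2 - 1) := by
          by_cases hy : u.2 < v.2
          · have := ih (u.1, u.2 + 1) (by simp only [lev] at *; omega) (by simp; omega)
            rw [this]
            simp only [lev]
            rw [show v.1 + v.2 - (u.1 + (u.2 + 1)) = v.1 + v.2 - (u.1 + u.2) - 1 by ring,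
              show v.1 - (u.2 + 1) = v.1 - u.2 - 1 by ring]
          · have hy1 : u.2 = v.2 := by omega
            rw [Wt_of_empty (PB_empty_of (by right; left; simp; omega))]
            rw [ch_gt (by simp only [lev]; omega), ch_gt (by simp only [lev]; omega)]
            ring
        rw [hr, hu, if_neg hdiag]
        conv_rhs => rw [ch_pascal (p := lev v - lev u) (v.1 - u.1) (by omega),
          ch_pascal (p := lev v - lev u) (v.1 - u.2) (by omega)]
        ring
  exact main (lev v - lev u).toNat u le_rfl h1


-- PART 4

/-- The point of a path at level `h`, where `a` is the level of the starting point. -/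
def ptAt (P : List (ℤ × ℤ)) (a h : ℤ) : ℤ × ℤ := P.getD (h - a).toNat dp

variable {P : List (ℤ × ℤ)} {u v : ℤ × ℤ}

lemma ptAt_mem (hP : P ∈ PB u v) {h : ℤ} (h1 : lev u ≤ h) (h2 : h ≤ lev v) :
    ptAt P (lev u) h ∈ P := by
  obtain ⟨hle, hlen⟩ := length_eq hP
  rw [mem_iff_getD]
  exact ⟨(h - lev u).toNat, by omega, rfl⟩

lemma lev_ptAt (hP : P ∈ PB u v) {h : ℤ} (h1 : lev u ≤ h) (h2 : h ≤ lev v) :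
    lev (ptAt P (lev u) h) = h := by
  obtain ⟨hle, hlen⟩ := length_eq hP
  have := lev_getD hP.1 (h - lev u).toNat (by omega)
  rw [getD_zero hP.2.1] at this
  unfold ptAt
  omega

lemma ptAt_start (hP : P ∈ PB u v) : ptAt P (lev u) (lev u) = u := by
  unfold ptAt
  rw [show (lev u - lev u).toNat = 0 by omega]
  exact getD_zero hP.2.1

lemma ptAt_end (hP : P ∈ PB u v) : ptAt P (lev u) (lev v) = v := by
  obtain ⟨hle, hlen⟩ := length_eq hP
  unfold ptAt
  rw [show (lev v - lev u).toNat = P.length - 1 by omega]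
  exact getD_last hP.1.1 hP.2.2.1

lemma ptAt_diag (hP : P ∈ PB u v) {h : ℤ} (h1 : lev u ≤ h) (h2 : h ≤ lev v) :
    h ≤ 2 * (ptAt P (lev u) h).1 := by
  have hm := ptAt_mem hP h1 h2
  have hl := lev_ptAt hP h1 h2
  have h3 := hP.2.2.2 _ hm
  rw [show lev (ptAt P (lev u) h) = (ptAt P (lev u) h).1 + (ptAt P (lev u) h).2 from rfl] at hl
  omega

lemma ptAt_uniq (hP : P ∈ PB u v) {p : ℤ × ℤ} (hp : p ∈ P) :
    ptAt P (lev u) (lev p) = p := by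
  obtain ⟨hle, hlen⟩ := length_eq hP
  obtain ⟨i, hi, hgd⟩ := mem_iff_getD.mp hp
  have := lev_getD hP.1 i hi
  rw [getD_zero hP.2.1, hgd] at this
  unfold ptAt
  rw [show (lev p - lev u).toNat = i by omega]
  exact hgd

lemma ptAt_lev_bounds (hP : P ∈ PB u v) {p : ℤ × ℤ} (hp : p ∈ P) :
    lev u ≤ lev p ∧ lev p ≤ lev v := by
  obtain ⟨hle, hlen⟩ := length_eq hP
  obtain ⟨i, hi, hgd⟩ := mem_iff_getD.mp hp
  have := lev_getD hP.1 i hi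
  rw [getD_zero hP.2.1, hgd] at this
  omega

lemma ptAt_step (hP : P ∈ PB u v) {h : ℤ} (h1 : lev u ≤ h) (h2 : h < lev v) :
    (ptAt P (lev u) (h+1)).1 = (ptAt P (lev u) h).1 ∨
    (ptAt P (lev u) (h+1)).1 = (ptAt P (lev u) h).1 + 1 := by
  obtain ⟨hle, hlen⟩ := length_eq hP
  have hs := step hP.1 (i := (h - lev u).toNat) (by omega)
  unfold ptAt
  rw [show (h + 1 - lev u).toNat = (h - lev u).toNat + 1 by omega]
  rcases hs with hs | hs <;> rw [hs] <;> simp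

lemma ivt (f : ℕ → ℤ) (n : ℕ)
    (hstep : ∀ i, i < n → f (i+1) ≤ f i + 1 ∧ f i ≤ f (i+1) + 1)
    (h0 : f 0 ≤ 0) (hn : 0 ≤ f n) : ∃ i, i ≤ n ∧ f i = 0 := by
  induction n with
  | zero => exact ⟨0, le_rfl, by omega⟩
  | succ n ih =>
    by_cases h : 0 ≤ f n
    · obtain ⟨i, hi, hfi⟩ := ih (fun i hi => hstep i (by omega)) h
      exact ⟨i, by omega, hfi⟩
    · have := hstep n (by omega)
      exact ⟨n + 1, le_rfl, by omega⟩

lemma meet {Q : List (ℤ × ℤ)} {u' v' : ℤ × ℤ}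
    (hP : P ∈ PB u v) (hQ : Q ∈ PB u' v') {h₀ h₁ : ℤ} (hh : h₀ ≤ h₁)
    (hu1 : lev u ≤ h₀) (hu2 : lev u' ≤ h₀) (hv1 : h₁ ≤ lev v) (hv2 : h₁ ≤ lev v')
    (e0 : (ptAt P (lev u) h₀).1 ≤ (ptAt Q (lev u') h₀).1)
    (e1 : (ptAt Q (lev u') h₁).1 ≤ (ptAt P (lev u) h₁).1) :
    ∃ p, p ∈ P ∧ p ∈ Q := by
  set f : ℕ → ℤ := fun t => (ptAt P (lev u) (h₀ + t)).1 - (ptAt Q (lev u') (h₀ + t)).1 with hf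
  have key : ∃ t, t ≤ (h₁ - h₀).toNat ∧ f t = 0 := by
    apply ivt
    · intro i hi
      have hsP := ptAt_step hP (h := h₀ + i) (by omega) (by omega)
      have hsQ := ptAt_step hQ (h := h₀ + i) (by omega) (by omega)
      simp only [hf]
      push_cast
      rw [show (h₀ + (↑i + 1)) = (h₀ + i) + 1 by ring]
      constructor <;> rcases hsP with hp | hp <;> rcases hsQ with hq | hq <;>
        rw [hp, hq] <;> omega
    · simpa [hf] using e0
    · have : h₀ + ((h₁ - h₀).toNat : ℤ) = h₁ := by omega
      simp only [hf, this]
      omega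
  obtain ⟨t, ht, hft⟩ := key
  have hb1 : lev u ≤ h₀ + (t : ℤ) := by omega
  have hb2 : h₀ + (t : ℤ) ≤ lev v := by omega
  have hb3 : lev u' ≤ h₀ + (t : ℤ) := by omega
  have hb4 : h₀ + (t : ℤ) ≤ lev v' := by omega
  refine ⟨ptAt P (lev u) (h₀ + (t : ℤ)), ptAt_mem hP hb1 hb2, ?_⟩
  have heq : ptAt P (lev u) (h₀ + (t : ℤ)) = ptAt Q (lev u') (h₀ + (t : ℤ)) := by
    apply eq_of_lev_x
    · rw [lev_ptAt hP hb1 hb2, lev_ptAt hQ hb3 hb4]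
    · simp only [hf] at hft; omega
  rw [heq]
  exact ptAt_mem hQ hb3 hb4


-- PART 5

lemma strictMono_fin_id {m : ℕ} (f : Fin m → Fin m) (h : StrictMono f) : ∀ i, f i = i := by
  have hsurj : Function.Surjective f := Finite.surjective_of_injective h.injective
  have hr : Set.range f = Set.range (id : Fin m → Fin m) := by
    rw [Set.range_id, Set.range_eq_univ]
    exact hsurj
  have := (StrictMono.range_inj h strictMono_id).mp hr
  intro i
  rw [this]
  rfl

section Claim2

variable {n m l : ℕ} {k : Fin l → ℤ}

/-- If a family of paths joining the start points to the `σ`-permuted end points is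
non-intersecting, then `σ` is the identity. -/
theorem sigma_eq_one (hkpos : ∀ t, 0 < k t) (hkmono : StrictMono k)
    (hkbd : ∀ t, 2 * k t ≤ (n : ℤ))
    (σ : Equiv.Perm (QIdx m l)) (F : QIdx m l → List (ℤ × ℤ))
    (hF : ∀ i, F i ∈ PB (startPt4 m l k i) (endPt4 n m l k (σ i)))
    (hNI : ∀ i j, i ≠ j → ∀ p ∈ F i, p ∉ F j) : σ = 1 := by
  -- abbreviations
  set st := startPt4 m l k with hst
  set en := endPt4 n m l k with hen
  have lev_st_inl : ∀ s : Fin m, lev (st (Sum.inl s)) = 1 := by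
    intro s; simp [hst, startPt4, lev]
  have lev_st_inr : ∀ t : Fin l, lev (st (Sum.inr t)) = 2 * k t + 1 := by
    intro t; simp [hst, startPt4, lev]; ring
  have lev_en_inl : ∀ q : Fin m, lev (en (Sum.inl q)) = 2 * n + 1 := by
    intro q; simp [hen, endPt4, lev]; ring
  have lev_en_inr : ∀ t : Fin l, lev (en (Sum.inr t)) = 2 * n - 2 * k t + 1 := by
    intro t; simp [hen, endPt4, lev]; ring
  -- the crossing principle
  have cross : ∀ i j, i ≠ j → ∀ h₀ h₁ : ℤ, h₀ ≤ h₁ →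
      lev (st i) ≤ h₀ → lev (st j) ≤ h₀ →
      h₁ ≤ lev (en (σ i)) → h₁ ≤ lev (en (σ j)) →
      (ptAt (F i) (lev (st i)) h₀).1 ≤ (ptAt (F j) (lev (st j)) h₀).1 →
      (ptAt (F j) (lev (st j)) h₁).1 ≤ (ptAt (F i) (lev (st i)) h₁).1 → False := by
    intro i j hij h₀ h₁ hh hs1 hs2 he1 he2 e0 e1
    obtain ⟨p, hp1, hp2⟩ := meet (hF i) (hF j) hh hs1 hs2 he1 he2 e0 e1
    exact hNI i j hij p hp1 hp2
  -- basic numeric facts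
  have hksum : ∀ t t' : Fin l, k t + k t' ≤ (n : ℤ) := by
    intro t t'; have := hkbd t; have := hkbd t'; omega
  -- no inr index can be mapped to an inl index
  have hinr : ∀ t : Fin l, ∀ q : Fin m, σ (Sum.inr t) ≠ Sum.inl q := by
    intro t q habs
    -- find an inl index mapped to an inr index
    have hexists : ∃ (s : Fin m) (t' : Fin l), σ (Sum.inl s) = Sum.inr t' := by
      by_contra hc
      push_neg at hc
      have hg : ∀ s : Fin m, ∃ s', σ (Sum.inl s) = Sum.inl s' := by
        intro s
        cases hσ : σ (Sum.inl s) with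
        | inl s' => exact ⟨s', rfl⟩
        | inr t' => exact absurd hσ (hc s t')
      choose g hg' using hg
      have ginj : Function.Injective g := by
        intro a b hab
        have : σ (Sum.inl a) = σ (Sum.inl b) := by rw [hg' a, hg' b, hab]
        simpa using σ.injective this
      obtain ⟨s₀, hs₀⟩ := Finite.surjective_of_injective ginj q
      have h1 : σ (Sum.inl s₀) = Sum.inl q := by rw [hg' s₀, hs₀]
      have := σ.injective (h1.trans habs.symm)
      simp at this
    obtain ⟨s, t', hst'⟩ := hexists
    have hne : (Sum.inr t : QIdx m l) ≠ Sum.inl s := by simp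
    apply cross (Sum.inr t) (Sum.inl s) hne (2 * k t + 1) (2 * n - 2 * k t' + 1)
      (by have := hksum t t'; omega)
      (by rw [lev_st_inr]) (by rw [lev_st_inl]; have := hkpos t; omega)
      (by rw [habs, lev_en_inl]; have := hkpos t'; omega)
      (by rw [hst', lev_en_inr])
    · -- start of inr t is leftmost at its level
      have e1 : (ptAt (F (Sum.inr t)) (lev (st (Sum.inr t))) (2 * k t + 1)).1 = k t + 1 := by
        have := ptAt_start (hF (Sum.inr t))
        simp only [lev_st_inr] at this ⊢
        rw [this]
        simp [hst, startPt4]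
      have e2 := ptAt_diag (hF (Sum.inl s)) (h := 2 * k t + 1)
        (by rw [lev_st_inl]; have := hkpos t; omega)
        (by rw [hst', lev_en_inr]; have := hksum t t'; omega)
      rw [e1]
      omega
    · -- end of inl s (at inr t') is leftmost at its level
      have e1 : (ptAt (F (Sum.inl s)) (lev (st (Sum.inl s))) (2 * n - 2 * k t' + 1)).1
          = (n : ℤ) - k t' + 1 := by
        have hev := ptAt_end (hF (Sum.inl s))
        rw [hst', lev_en_inr] at hev
        rw [hev]
        simp [hen, endPt4]
      have e2 := ptAt_diag (hF (Sum.inr t)) (h := 2 * n - 2 * k t' + 1)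
        (by rw [lev_st_inr]; have := hksum t t'; omega)
        (by rw [habs, lev_en_inl]; have := hkpos t'; omega)
      rw [e1]
      omega
  -- hence σ maps inr into inr and (by injectivity) inl into inl
  have hτ : ∀ t : Fin l, ∃ t', σ (Sum.inr t) = Sum.inr t' := by
    intro t
    cases hσ : σ (Sum.inr t) with
    | inl q => exact absurd hσ (hinr t q)
    | inr t' => exact ⟨t', rfl⟩
  choose τ hτ' using hτ
  have τinj : Function.Injective τ := by
    intro a b hab
    have : σ (Sum.inr a) = σ (Sum.inr b) := by rw [hτ' a, hτ' b, hab]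
    simpa using σ.injective this
  have hπ : ∀ s : Fin m, ∃ s', σ (Sum.inl s) = Sum.inl s' := by
    intro s
    cases hσ : σ (Sum.inl s) with
    | inl s' => exact ⟨s', rfl⟩
    | inr t' =>
      exfalso
      obtain ⟨t₀, ht₀⟩ := Finite.surjective_of_injective τinj t'
      have h1 : σ (Sum.inr t₀) = Sum.inr t' := by rw [hτ' t₀, ht₀]
      have := σ.injective (hσ.trans h1.symm)
      simp at this
  choose π hπ' using hπ
  have πinj : Function.Injective π := by
    intro a b hab
    have : σ (Sum.inl a) = σ (Sum.inl b) := by rw [hπ' a, hπ' b, hab]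
    simpa using σ.injective this
  -- π is strictly monotone
  have πmono : StrictMono π := by
    intro s s' hss'
    rcases lt_trichotomy (π s) (π s') with h | h | h
    · exact h
    · exact absurd (πinj h) (by omega)
    · exfalso
      have hne : (Sum.inl s : QIdx m l) ≠ Sum.inl s' := by simp; omega
      apply cross (Sum.inl s) (Sum.inl s') hne 1 (2 * n + 1) (by omega)
        (by rw [lev_st_inl]) (by rw [lev_st_inl])
        (by rw [hπ' s, lev_en_inl]) (by rw [hπ' s', lev_en_inl])
      · have e1 := ptAt_start (hF (Sum.inl s))
        have e2 := ptAt_start (hF (Sum.inl s'))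
        simp only [lev_st_inl] at e1 e2 ⊢
        rw [e1, e2]
        simp [hst, startPt4]
        omega
      · have e1 := ptAt_end (hF (Sum.inl s))
        have e2 := ptAt_end (hF (Sum.inl s'))
        rw [hπ' s, lev_en_inl] at e1
        rw [hπ' s', lev_en_inl] at e2
        simp only [lev_st_inl] at e1 e2 ⊢
        rw [e1, e2]
        simp [hen, endPt4]
        have : (π s' : ℤ) < π s := by exact_mod_cast h
        omega
  -- τ is strictly monotone
  have τmono : StrictMono τ := by
    intro t t'' htt
    rcases lt_trichotomy (τ t) (τ t'') with h | h | h
    · exact h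
    · exact absurd (τinj h) (by omega)
    · exfalso
      -- τ t'' < τ t, t < t''
      have hkt : k t < k t'' := hkmono htt
      have hkτ : k (τ t'') < k (τ t) := hkmono h
      have hne : (Sum.inr t'' : QIdx m l) ≠ Sum.inr t := by simp; omega
      apply cross (Sum.inr t'') (Sum.inr t) hne (2 * k t'' + 1) (2 * n - 2 * k (τ t) + 1)
        (by have := hksum t'' (τ t); omega)
        (by rw [lev_st_inr]) (by rw [lev_st_inr]; omega)
        (by rw [hτ' t'', lev_en_inr]; omega) (by rw [hτ' t, lev_en_inr])
      · have e1 : (ptAt (F (Sum.inr t'')) (lev (st (Sum.inr t''))) (2 * k t'' + 1)).1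
            = k t'' + 1 := by
          have := ptAt_start (hF (Sum.inr t''))
          simp only [lev_st_inr] at this ⊢
          rw [this]
          simp [hst, startPt4]
        have e2 := ptAt_diag (hF (Sum.inr t)) (h := 2 * k t'' + 1)
          (by rw [lev_st_inr]; omega)
          (by rw [hτ' t, lev_en_inr]; have := hksum t'' (τ t); omega)
        rw [e1]
        omega
      · have e1 : (ptAt (F (Sum.inr t)) (lev (st (Sum.inr t))) (2 * n - 2 * k (τ t) + 1)).1
            = (n : ℤ) - k (τ t) + 1 := by
          have hev := ptAt_end (hF (Sum.inr t))
          rw [hτ' t, lev_en_inr] at hev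
          rw [hev]
          simp [hen, endPt4]
        have e2 := ptAt_diag (hF (Sum.inr t'')) (h := 2 * n - 2 * k (τ t) + 1)
          (by rw [lev_st_inr]; have := hksum t'' (τ t); omega)
          (by rw [hτ' t'', lev_en_inr]; omega)
        rw [e1]
        omega
  -- conclude
  have hπid := strictMono_fin_id π πmono
  have hτid := strictMono_fin_id τ τmono
  ext i : 1
  cases i with
  | inl s => rw [hπ' s, hπid s]; rfl
  | inr t => rw [hτ' t, hτid t]; rfl

end Claim2

-- PART 6 : the involution

lemma headI_cons_tail {α : Type*} [Inhabited α] {L : List α} (h : L ≠ []) :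
    L.headI :: L.tail = L := by
  cases L with
  | nil => simp at h
  | cons a t => rfl

lemma headI_mem {α : Type*} [Inhabited α] {L : List α} (h : L ≠ []) : L.headI ∈ L := by
  cases L with
  | nil => simp at h
  | cons a t => simp

lemma head?_eq_headI {α : Type*} [Inhabited α] {L : List α} (h : L ≠ []) :
    L.head? = some L.headI := by
  cases L with
  | nil => simp at h
  | cons a t => rfl

lemma dropWhile_headI_false {α : Type*} [Inhabited α] {q : α → Bool} {L : List α}
    (h : L.dropWhile q ≠ []) : q ((L.dropWhile q).headI) = false := by
  induction L with
  | nil => simp at h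
  | cons a t ih =>
    by_cases hq : q a
    · rw [List.dropWhile_cons_of_pos hq] at h ⊢
      exact ih h
    · rw [List.dropWhile_cons_of_neg hq]
      simpa using hq

lemma takeWhile_append_cons {α : Type*} {q : α → Bool} {A B : List α} {b : α}
    (hA : ∀ x ∈ A, q x = true) (hb : q b = false) :
    (A ++ b :: B).takeWhile q = A ∧ (A ++ b :: B).dropWhile q = b :: B := by
  induction A with
  | nil => simp [List.takeWhile_cons, List.dropWhile_cons, hb]
  | cons a t ih =>
    have ha : q a = true := hA a (by simp)
    have ih' := ih (fun x hx => hA x (by simp [hx]))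
    constructor
    · rw [List.cons_append, List.takeWhile_cons_of_pos ha, ih'.1]
    · rw [List.cons_append, List.dropWhile_cons_of_pos ha, ih'.2]

/-- Swapping the tails of two paths at a common point produces a path. -/
lemma swap_path_mem {A B D C : List (ℤ × ℤ)} {u v u' v' p₀ : ℤ × ℤ}
    (h1 : (A ++ B) ∈ PB u v) (h2 : (C ++ D) ∈ PB u' v')
    (hB : B.head? = some p₀) (hD : D.head? = some p₀) :
    (A ++ D) ∈ PB u v' := by
  have hBne : B ≠ [] := by intro hh; rw [hh] at hB; simp at hB
  have hDne : D ≠ [] := by intro hh; rw [hh] at hD; simp at hD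
  obtain ⟨⟨hne1, hc1⟩, hh1, hg1, hb1⟩ := h1
  obtain ⟨⟨hne2, hc2⟩, hh2, hg2, hb2⟩ := h2
  rw [List.Chain', List.isChain_append] at hc1 hc2
  refine ⟨⟨by simp [hDne], ?_⟩, ?_, ?_, ?_⟩
  · rw [List.Chain', List.isChain_append]
    refine ⟨hc1.1, hc2.2.1, ?_⟩
    intro x hx y hy
    rw [hD] at hy
    simp at hy
    subst hy
    have := hc1.2.2 x hx p₀ (by rw [hB]; simp)
    exact this
  · rw [List.head?_append] at hh1 ⊢
    rw [hB] at hh1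
    rw [hD]
    exact hh1
  · rw [List.getLast?_append] at hg2 ⊢
    obtain ⟨w, hw⟩ : ∃ w, D.getLast? = some w :=
      ⟨D.getLast hDne, List.getLast?_eq_getLast hDne⟩
    rw [hw] at hg2 ⊢
    simpa using hg2
  · intro p hp
    rcases List.mem_append.mp hp with h | h
    · exact hb1 p (List.mem_append.mpr (Or.inl h))
    · exact hb2 p (List.mem_append.mpr (Or.inr h))

lemma pw_swap (A B C D : List (ℤ × ℤ)) :
    pw (A ++ D) * pw (C ++ B) = pw (A ++ B) * pw (C ++ D) := by
  unfold pw
  rw [List.countP_append, List.countP_append, List.countP_append, List.countP_append,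
    pow_add, pow_add, pow_add, pow_add]
  ring

section Involution

variable {m l : ℕ}

def eee (m l : ℕ) : QIdx m l ≃ Fin (m + l) := finSumFinEquiv

def badSet (F : QIdx m l → List (ℤ × ℤ)) : Finset (QIdx m l) :=
  Finset.univ.filter (fun i => ∃ p ∈ F i, ∃ j, j ≠ i ∧ p ∈ F j)

variable (F : QIdx m l → List (ℤ × ℤ))

noncomputable def i0 (h : (badSet F).Nonempty) : QIdx m l :=
  (eee m l).symm (((badSet F).image (eee m l)).min' (h.image _))

lemma i0_mem (h : (badSet F).Nonempty) : i0 F h ∈ badSet F := by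
  have hm := Finset.min'_mem ((badSet F).image (eee m l)) (h.image _)
  obtain ⟨i, hi, hei⟩ := Finset.mem_image.mp hm
  unfold i0
  rw [← hei, Equiv.symm_apply_apply]
  exact hi

lemma i0_min (h : (badSet F).Nonempty) {i : QIdx m l} (hi : i ∈ badSet F) :
    eee m l (i0 F h) ≤ eee m l i := by
  unfold i0
  rw [Equiv.apply_symm_apply]
  exact Finset.min'_le _ _ (Finset.mem_image_of_mem _ hi)

def shp (a : QIdx m l) (p : ℤ × ℤ) : Bool := decide (∃ j, j ≠ a ∧ p ∈ F j)

noncomputable def bef1 (h : (badSet F).Nonempty) : List (ℤ × ℤ) :=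
  (F (i0 F h)).takeWhile (fun p => !shp F (i0 F h) p)

noncomputable def aft1 (h : (badSet F).Nonempty) : List (ℤ × ℤ) :=
  (F (i0 F h)).dropWhile (fun p => !shp F (i0 F h) p)

lemma bef_aft1 (h : (badSet F).Nonempty) : bef1 F h ++ aft1 F h = F (i0 F h) :=
  List.takeWhile_append_dropWhile

lemma aft1_ne (h : (badSet F).Nonempty) : aft1 F h ≠ [] := by
  unfold aft1
  rw [Ne, List.dropWhile_eq_nil_iff]
  push_neg
  have := i0_mem F h
  rw [badSet, Finset.mem_filter] at this
  obtain ⟨-, p, hp, j, hj, hpj⟩ := this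
  refine ⟨p, hp, ?_⟩
  have hs : shp F (i0 F h) p = true := decide_eq_true ⟨j, hj, hpj⟩
  simp [hs]

noncomputable def p0 (h : (badSet F).Nonempty) : ℤ × ℤ := (aft1 F h).headI

lemma p0_mem_aft1 (h : (badSet F).Nonempty) : p0 F h ∈ aft1 F h :=
  headI_mem (aft1_ne F h)

lemma aft1_head? (h : (badSet F).Nonempty) : (aft1 F h).head? = some (p0 F h) :=
  head?_eq_headI (aft1_ne F h)

lemma p0_mem_i0 (h : (badSet F).Nonempty) : p0 F h ∈ F (i0 F h) := by
  rw [← bef_aft1 F h]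
  exact List.mem_append.mpr (Or.inr (p0_mem_aft1 F h))

lemma p0_sh (h : (badSet F).Nonempty) : ∃ j, j ≠ i0 F h ∧ p0 F h ∈ F j := by
  have := dropWhile_headI_false (q := fun p => !shp F (i0 F h) p) (L := F (i0 F h))
    (aft1_ne F h)
  simp only [Bool.not_eq_false'] at this
  have := of_decide_eq_true this
  exact this

lemma bef1_not_sh (h : (badSet F).Nonempty) {x : ℤ × ℤ} (hx : x ∈ bef1 F h) :
    ¬∃ j, j ≠ i0 F h ∧ x ∈ F j := by
  have := List.mem_takeWhile_imp hx
  simp only [Bool.not_eq_true'] at this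
  exact of_decide_eq_false this

noncomputable def jset (h : (badSet F).Nonempty) : Finset (QIdx m l) :=
  Finset.univ.filter (fun j => j ≠ i0 F h ∧ p0 F h ∈ F j)

lemma jset_ne (h : (badSet F).Nonempty) : (jset F h).Nonempty := by
  obtain ⟨j, hj1, hj2⟩ := p0_sh F h
  exact ⟨j, by simp [jset, hj1, hj2]⟩

noncomputable def j0 (h : (badSet F).Nonempty) : QIdx m l :=
  (eee m l).symm (((jset F h).image (eee m l)).min' ((jset_ne F h).image _))

lemma j0_mem (h : (badSet F).Nonempty) : j0 F h ∈ jset F h := by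
  have hm := Finset.min'_mem ((jset F h).image (eee m l)) ((jset_ne F h).image _)
  obtain ⟨i, hi, hei⟩ := Finset.mem_image.mp hm
  unfold j0
  rw [← hei, Equiv.symm_apply_apply]
  exact hi

lemma j0_min (h : (badSet F).Nonempty) {j : QIdx m l} (hj : j ∈ jset F h) :
    eee m l (j0 F h) ≤ eee m l j := by
  unfold j0
  rw [Equiv.apply_symm_apply]
  exact Finset.min'_le _ _ (Finset.mem_image_of_mem _ hj)

lemma j0_ne (h : (badSet F).Nonempty) : j0 F h ≠ i0 F h := by
  have := j0_mem F h
  rw [jset, Finset.mem_filter] at this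
  exact this.2.1

lemma p0_mem_j0 (h : (badSet F).Nonempty) : p0 F h ∈ F (j0 F h) := by
  have := j0_mem F h
  rw [jset, Finset.mem_filter] at this
  exact this.2.2

noncomputable def bef2 (h : (badSet F).Nonempty) : List (ℤ × ℤ) :=
  (F (j0 F h)).takeWhile (fun q => !decide (q = p0 F h))

noncomputable def aft2 (h : (badSet F).Nonempty) : List (ℤ × ℤ) :=
  (F (j0 F h)).dropWhile (fun q => !decide (q = p0 F h))

lemma bef_aft2 (h : (badSet F).Nonempty) : bef2 F h ++ aft2 F h = F (j0 F h) :=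
  List.takeWhile_append_dropWhile

lemma aft2_ne (h : (badSet F).Nonempty) : aft2 F h ≠ [] := by
  unfold aft2
  rw [Ne, List.dropWhile_eq_nil_iff]
  push_neg
  exact ⟨p0 F h, p0_mem_j0 F h, by simp⟩

lemma aft2_headI (h : (badSet F).Nonempty) : (aft2 F h).headI = p0 F h := by
  have := dropWhile_headI_false (q := fun q => !decide (q = p0 F h)) (L := F (j0 F h))
    (aft2_ne F h)
  simpa [aft2] using this

lemma aft2_head? (h : (badSet F).Nonempty) : (aft2 F h).head? = some (p0 F h) := by
  rw [head?_eq_headI (aft2_ne F h), aft2_headI]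

lemma p0_mem_aft2 (h : (badSet F).Nonempty) : p0 F h ∈ aft2 F h := by
  rw [← aft2_headI F h]
  exact headI_mem (aft2_ne F h)

lemma bef2_ne_p0 (h : (badSet F).Nonempty) {x : ℤ × ℤ} (hx : x ∈ bef2 F h) :
    x ≠ p0 F h := by
  have := List.mem_takeWhile_imp hx
  simpa using this

noncomputable def newF (h : (badSet F).Nonempty) : QIdx m l → List (ℤ × ℤ) :=
  Function.update (Function.update F (i0 F h) (bef1 F h ++ aft2 F h)) (j0 F h)
    (bef2 F h ++ aft1 F h)

lemma newF_i0 (h : (badSet F).Nonempty) : newF F h (i0 F h) = bef1 F h ++ aft2 F h := by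
  unfold newF
  rw [Function.update_of_ne (Ne.symm (j0_ne F h)), Function.update_self]

lemma newF_j0 (h : (badSet F).Nonempty) : newF F h (j0 F h) = bef2 F h ++ aft1 F h := by
  unfold newF
  rw [Function.update_self]

lemma newF_other (h : (badSet F).Nonempty) {i : QIdx m l} (h1 : i ≠ i0 F h)
    (h2 : i ≠ j0 F h) : newF F h i = F i := by
  unfold newF
  rw [Function.update_of_ne h2, Function.update_of_ne h1]

lemma mem_newF (h : (badSet F).Nonempty) {i : QIdx m l} {p : ℤ × ℤ}
    (hp : p ∈ newF F h i) : p ∈ F i ∨ p ∈ F (i0 F h) ∨ p ∈ F (j0 F h) := by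
  by_cases h1 : i = i0 F h
  · subst h1
    rw [newF_i0] at hp
    rcases List.mem_append.mp hp with hh | hh
    · left; rw [← bef_aft1 F h]; exact List.mem_append.mpr (Or.inl hh)
    · right; right; rw [← bef_aft2 F h]; exact List.mem_append.mpr (Or.inr hh)
  by_cases h2 : i = j0 F h
  · subst h2
    rw [newF_j0] at hp
    rcases List.mem_append.mp hp with hh | hh
    · left; rw [← bef_aft2 F h]; exact List.mem_append.mpr (Or.inl hh)
    · right; left; rw [← bef_aft1 F h]; exact List.mem_append.mpr (Or.inr hh)
  · rw [newF_other F h h1 h2] at hp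
    exact Or.inl hp

lemma p0_mem_newF_i0 (h : (badSet F).Nonempty) : p0 F h ∈ newF F h (i0 F h) := by
  rw [newF_i0]
  exact List.mem_append.mpr (Or.inr (p0_mem_aft2 F h))

lemma p0_mem_newF_j0 (h : (badSet F).Nonempty) : p0 F h ∈ newF F h (j0 F h) := by
  rw [newF_j0]
  exact List.mem_append.mpr (Or.inr (p0_mem_aft1 F h))


-- involution properties

lemma j0_badF (h : (badSet F).Nonempty) : j0 F h ∈ badSet F := by
  rw [badSet, Finset.mem_filter]
  exact ⟨Finset.mem_univ _, p0 F h, p0_mem_j0 F h, i0 F h, Ne.symm (j0_ne F h), p0_mem_i0 F h⟩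

lemma badSet_new_i0mem (h : (badSet F).Nonempty) : i0 F h ∈ badSet (newF F h) := by
  rw [badSet, Finset.mem_filter]
  exact ⟨Finset.mem_univ _, p0 F h, p0_mem_newF_i0 F h, j0 F h, j0_ne F h, p0_mem_newF_j0 F h⟩

lemma hnew (h : (badSet F).Nonempty) : (badSet (newF F h)).Nonempty :=
  ⟨i0 F h, badSet_new_i0mem F h⟩

lemma badSet_new_subset (h : (badSet F).Nonempty) : badSet (newF F h) ⊆ badSet F := by
  intro i hi
  by_cases h1 : i = i0 F h
  · subst h1; exact i0_mem F h
  by_cases h2 : i = j0 F h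
  · subst h2; exact j0_badF F h
  rw [badSet, Finset.mem_filter] at hi ⊢
  obtain ⟨-, p, hp, j, hj, hpj⟩ := hi
  rw [newF_other F h h1 h2] at hp
  rcases mem_newF F h hpj with hh | hh | hh
  · exact ⟨Finset.mem_univ _, p, hp, j, hj, hh⟩
  · exact ⟨Finset.mem_univ _, p, hp, i0 F h, Ne.symm h1, hh⟩
  · exact ⟨Finset.mem_univ _, p, hp, j0 F h, Ne.symm h2, hh⟩

lemma i0_new (h : (badSet F).Nonempty) : i0 (newF F h) (hnew F h) = i0 F h := by
  apply (eee m l).injective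
  apply le_antisymm
  · exact i0_min _ _ (badSet_new_i0mem F h)
  · exact i0_min F h (badSet_new_subset F h (i0_mem _ (hnew F h)))

lemma shp_new_bef1 (h : (badSet F).Nonempty) (hnd : (F (i0 F h)).Nodup) {x : ℤ × ℤ}
    (hx : x ∈ bef1 F h) : shp (newF F h) (i0 F h) x = false := by
  apply decide_eq_false
  rintro ⟨j, hj, hxj⟩
  by_cases hjj : j = j0 F h
  · subst hjj
    rw [newF_j0] at hxj
    rcases List.mem_append.mp hxj with hh | hh
    · exact bef1_not_sh F h hx ⟨j0 F h, j0_ne F h,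
        by rw [← bef_aft2 F h]; exact List.mem_append.mpr (Or.inl hh)⟩
    · have hnd2 : (bef1 F h ++ aft1 F h).Nodup := by rw [bef_aft1 F h]; exact hnd
      have := (List.nodup_append.mp hnd2).2.2
      exact this x hx x hh rfl
  · rw [newF_other F h hj hjj] at hxj
    exact bef1_not_sh F h hx ⟨j, hj, hxj⟩

lemma shp_new_p0 (h : (badSet F).Nonempty) :
    shp (newF F h) (i0 F h) (p0 F h) = true :=
  decide_eq_true ⟨j0 F h, j0_ne F h, p0_mem_newF_j0 F h⟩

lemma bef1_new (h : (badSet F).Nonempty) (hnd : (F (i0 F h)).Nodup) :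
    bef1 (newF F h) (hnew F h) = bef1 F h ∧ aft1 (newF F h) (hnew F h) = aft2 F h := by
  unfold bef1 aft1
  rw [i0_new F h, newF_i0 F h]
  have hsplit : aft2 F h = p0 F h :: (aft2 F h).tail := by
    rw [← aft2_headI F h]
    exact (headI_cons_tail (aft2_ne F h)).symm
  rw [hsplit]
  apply takeWhile_append_cons
  · intro x hx
    simp [shp_new_bef1 F h hnd hx]
  · simp [shp_new_p0 F h]

lemma p0_new (h : (badSet F).Nonempty) (hnd : (F (i0 F h)).Nodup) :
    p0 (newF F h) (hnew F h) = p0 F h := by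
  unfold p0
  rw [(bef1_new F h hnd).2, aft2_headI]
  rfl

lemma j0_new (h : (badSet F).Nonempty) (hnd : (F (i0 F h)).Nodup) :
    j0 (newF F h) (hnew F h) = j0 F h := by
  have hmem : ∀ j, j ∈ jset (newF F h) (hnew F h) ↔ (j ≠ i0 F h ∧ p0 F h ∈ newF F h j) := by
    intro j
    rw [jset, Finset.mem_filter, i0_new F h, p0_new F h hnd]
    simp
  apply (eee m l).injective
  apply le_antisymm
  · apply j0_min
    rw [hmem]
    exact ⟨j0_ne F h, p0_mem_newF_j0 F h⟩
  · have hj := j0_mem (newF F h) (hnew F h)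
    rw [hmem] at hj
    obtain ⟨hj1, hj2⟩ := hj
    by_cases hjj : j0 (newF F h) (hnew F h) = j0 F h
    · rw [hjj]
    · rw [newF_other F h hj1 hjj] at hj2
      apply j0_min F h
      rw [jset, Finset.mem_filter]
      exact ⟨Finset.mem_univ _, hj1, hj2⟩

lemma bef2_new (h : (badSet F).Nonempty) (hnd : (F (i0 F h)).Nodup) :
    bef2 (newF F h) (hnew F h) = bef2 F h ∧ aft2 (newF F h) (hnew F h) = aft1 F h := by
  unfold bef2 aft2
  rw [j0_new F h hnd, p0_new F h hnd, newF_j0 F h]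
  have hsplit : aft1 F h = p0 F h :: (aft1 F h).tail :=
    (headI_cons_tail (aft1_ne F h)).symm
  rw [hsplit]
  apply takeWhile_append_cons
  · intro x hx
    simp [bef2_ne_p0 F h hx]
  · simp

lemma newF_new (h : (badSet F).Nonempty) (hnd : (F (i0 F h)).Nodup) :
    newF (newF F h) (hnew F h) = F := by
  funext i
  by_cases h1 : i = i0 F h
  · subst h1
    have e := newF_i0 (newF F h) (hnew F h)
    rw [i0_new F h] at e
    rw [e, (bef1_new F h hnd).1, (bef2_new F h hnd).2, bef_aft1 F h]
  by_cases h2 : i = j0 F h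
  · subst h2
    have e := newF_j0 (newF F h) (hnew F h)
    rw [j0_new F h hnd] at e
    rw [e, (bef2_new F h hnd).1, (bef1_new F h hnd).2, bef_aft2 F h]
  · have e := newF_other (newF F h) (hnew F h) (i := i)
      (by rw [i0_new F h]; exact h1) (by rw [j0_new F h hnd]; exact h2)
    rw [e, newF_other F h h1 h2]

lemma newF_mem_PB {st en : QIdx m l → ℤ × ℤ} {σ : Equiv.Perm (QIdx m l)}
    (hF : ∀ i, F i ∈ PB (st i) (en (σ i))) (h : (badSet F).Nonempty) :
    ∀ i, newF F h i ∈ PB (st i) (en ((σ * Equiv.swap (i0 F h) (j0 F h)) i)) := by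
  have hPB1 : bef1 F h ++ aft1 F h ∈ PB (st (i0 F h)) (en (σ (i0 F h))) := by
    rw [bef_aft1 F h]; exact hF _
  have hPB2 : bef2 F h ++ aft2 F h ∈ PB (st (j0 F h)) (en (σ (j0 F h))) := by
    rw [bef_aft2 F h]; exact hF _
  intro i
  by_cases h1 : i = i0 F h
  · subst h1
    rw [newF_i0 F h]
    have hswap : (σ * Equiv.swap (i0 F h) (j0 F h)) (i0 F h) = σ (j0 F h) := by
      simp [Equiv.Perm.mul_apply, Equiv.swap_apply_left]
    rw [hswap]
    exact swap_path_mem hPB1 hPB2 (aft1_head? F h) (aft2_head? F h)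
  by_cases h2 : i = j0 F h
  · subst h2
    rw [newF_j0 F h]
    have hswap : (σ * Equiv.swap (i0 F h) (j0 F h)) (j0 F h) = σ (i0 F h) := by
      simp [Equiv.Perm.mul_apply, Equiv.swap_apply_right]
    rw [hswap]
    exact swap_path_mem hPB2 hPB1 (aft2_head? F h) (aft1_head? F h)
  · rw [newF_other F h h1 h2]
    have hswap : (σ * Equiv.swap (i0 F h) (j0 F h)) i = σ i := by
      simp [Equiv.Perm.mul_apply, Equiv.swap_apply_of_ne_of_ne h1 h2]
    rw [hswap]
    exact hF i

lemma wprod_new (h : (badSet F).Nonempty) :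
    (∏ i, pw (newF F h i)) = ∏ i, pw (F i) := by
  classical
  have hne : i0 F h ≠ j0 F h := Ne.symm (j0_ne F h)
  have key : ∀ i, pw (newF F h i)
      = Function.update (Function.update (fun j => pw (F j)) (i0 F h)
          (pw (bef1 F h ++ aft2 F h))) (j0 F h) (pw (bef2 F h ++ aft1 F h)) i := by
    intro i
    unfold newF
    simp only [Function.apply_update (fun (_ : QIdx m l) (L : List (ℤ × ℤ)) => pw L)]
  rw [Finset.prod_congr rfl (fun i _ => key i)]
  rw [Finset.prod_update_of_mem (Finset.mem_univ _)]
  rw [Finset.prod_update_of_mem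
    (Finset.mem_sdiff.mpr ⟨Finset.mem_univ _, by simp [hne]⟩)]
  rw [← Finset.mul_prod_erase Finset.univ _ (Finset.mem_univ (j0 F h)),
    ← Finset.mul_prod_erase (Finset.univ.erase (j0 F h)) _
      (Finset.mem_erase.mpr ⟨hne, Finset.mem_univ _⟩)]
  simp only [Finset.erase_eq]
  rw [← mul_assoc, ← mul_assoc]
  congr 1
  rw [mul_comm (pw (bef2 F h ++ aft1 F h)), pw_swap (bef1 F h) (aft1 F h) (bef2 F h) (aft2 F h),
    bef_aft1 F h, bef_aft2 F h, mul_comm]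

end Involution

-- PART 7 : assembly

section Assembly

variable {m l : ℕ}

noncomputable def FamsF (st en : QIdx m l → ℤ × ℤ) (σ : Equiv.Perm (QIdx m l)) :
    Finset (QIdx m l → List (ℤ × ℤ)) :=
  Fintype.piFinset (fun i => PBF (st i) (en (σ i)))

def wprod (F : QIdx m l → List (ℤ × ℤ)) : ℤ := ∏ i, pw (F i)

lemma mem_FamsF {st en : QIdx m l → ℤ × ℤ} {σ : Equiv.Perm (QIdx m l)}
    {F : QIdx m l → List (ℤ × ℤ)} :
    F ∈ FamsF st en σ ↔ ∀ i, F i ∈ PB (st i) (en (σ i)) := by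
  simp only [FamsF, Fintype.mem_piFinset, PBF, Set.Finite.mem_toFinset]

/-- The intersecting families cancel in pairs. -/
lemma cancel_bad (st en : QIdx m l → ℤ × ℤ) :
    ∑ x ∈ (Finset.univ.sigma
        (fun σ : Equiv.Perm (QIdx m l) =>
          (FamsF st en σ).filter (fun F => (badSet F).Nonempty))),
      ((Equiv.Perm.sign x.1 : ℤˣ) : ℤ) * wprod x.2 = 0 := by
  classical
  apply Finset.sum_involution
    (g := fun x hx =>
      ⟨x.1 * Equiv.swap (i0 x.2 (Finset.mem_filter.mp (Finset.mem_sigma.mp hx).2).2)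
          (j0 x.2 (Finset.mem_filter.mp (Finset.mem_sigma.mp hx).2).2),
        newF x.2 (Finset.mem_filter.mp (Finset.mem_sigma.mp hx).2).2⟩)
  · -- cancellation
    rintro ⟨σ, F⟩ hx
    set hB := (Finset.mem_filter.mp (Finset.mem_sigma.mp hx).2).2 with hBdef
    have hsign : ((Equiv.Perm.sign (σ * Equiv.swap (i0 F hB) (j0 F hB)) : ℤˣ) : ℤ)
        = -((Equiv.Perm.sign σ : ℤˣ) : ℤ) := by
      rw [Equiv.Perm.sign_mul, Equiv.Perm.sign_swap (Ne.symm (j0_ne F hB))]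
      push_cast
      ring
    show ((Equiv.Perm.sign σ : ℤˣ) : ℤ) * wprod F + _ * wprod (newF F hB) = 0
    rw [hsign]
    have := wprod_new F hB
    unfold wprod
    rw [this]
    ring
  · -- g x ≠ x
    rintro ⟨σ, F⟩ hx -
    set hB := (Finset.mem_filter.mp (Finset.mem_sigma.mp hx).2).2 with hBdef
    intro heq
    have h1 : σ * Equiv.swap (i0 F hB) (j0 F hB) = σ := congrArg Sigma.fst heq
    have h2 : Equiv.swap (i0 F hB) (j0 F hB) = 1 :=
      mul_left_cancel (a := σ) (show σ * _ = σ * 1 by rw [mul_one]; exact h1)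
    have := Equiv.swap_apply_left (i0 F hB) (j0 F hB)
    rw [h2] at this
    simp at this
    exact (j0_ne F hB) this.symm
  · -- involution
    rintro ⟨σ, F⟩ hx
    set hB := (Finset.mem_filter.mp (Finset.mem_sigma.mp hx).2).2 with hBdef
    have hF : ∀ i, F i ∈ PB (st i) (en (σ i)) :=
      mem_FamsF.mp (Finset.mem_filter.mp (Finset.mem_sigma.mp hx).2).1
    have hnd : (F (i0 F hB)).Nodup := nodup (hF (i0 F hB)).1
    apply Sigma.ext
    · show (σ * Equiv.swap (i0 F hB) (j0 F hB)) * Equiv.swap _ _ = σ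
      rw [i0_new F hB, j0_new F hB hnd, mul_assoc, Equiv.swap_mul_self, mul_one]
    · show HEq (newF (newF F hB) _) F
      rw [newF_new F hB hnd]
  · -- membership
    rintro ⟨σ, F⟩ hx
    set hB := (Finset.mem_filter.mp (Finset.mem_sigma.mp hx).2).2 with hBdef
    have hF : ∀ i, F i ∈ PB (st i) (en (σ i)) :=
      mem_FamsF.mp (Finset.mem_filter.mp (Finset.mem_sigma.mp hx).2).1
    refine Finset.mem_sigma.mpr ⟨Finset.mem_univ _, Finset.mem_filter.mpr ⟨?_, ?_⟩⟩
    · exact mem_FamsF.mpr (newF_mem_PB F hF hB)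
    · exact hnew F hB


lemma Wt_eq_gen {u v : ℤ × ℤ} (h1 : u.2 ≤ u.1) (h2 : v.2 ≤ v.1) {T A B : ℤ}
    (hT : lev v - lev u = T)
    (hA : ch T (v.1 - u.1) = ch T A) (hB : ch T (v.1 - u.2) = ch T B) :
    Wt u v = ch T A + ch T B := by
  rw [Wt_formula h1 h2, hT, hA, hB]

lemma entry_eq (n m l : ℕ) (k : Fin l → ℤ) (i j : QIdx m l) :
    Wt (startPt4 m l k i) (endPt4 n m l k j) = Nmat n m l k i j := by
  cases i with
  | inl p =>
    cases j with
    | inl q =>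
      show Wt _ _ = ch (2 * (n : ℤ)) ((n : ℤ) + ((q : ℤ) + 1) - ((p : ℤ) + 1))
          + ch (2 * (n : ℤ)) ((n : ℤ) - ((p : ℤ) + 1) - ((q : ℤ) + 1) + 1)
      refine Wt_eq_gen ?_ ?_ ?_ ?_ ?_
      · simp only [startPt4]; omega
      · simp only [endPt4]; omega
      · simp only [startPt4, endPt4, lev]; ring
      · exact congrArg _ (by simp only [startPt4, endPt4]; ring)
      · rw [ch_symm]; exact congrArg _ (by simp only [startPt4, endPt4]; ring)
    | inr t =>
      show Wt _ _ = ch (2 * (n : ℤ) - 2 * k t) ((n : ℤ) - k t - ((p : ℤ) + 1) + 1)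
          + ch (2 * (n : ℤ) - 2 * k t) ((n : ℤ) - k t - ((p : ℤ) + 1))
      refine Wt_eq_gen ?_ ?_ ?_ ?_ ?_
      · simp only [startPt4]; omega
      · simp only [endPt4]; omega
      · simp only [startPt4, endPt4, lev]; ring
      · exact congrArg _ (by simp only [startPt4, endPt4]; ring)
      · rw [ch_symm]; exact congrArg _ (by simp only [startPt4, endPt4]; ring)
  | inr t =>
    cases j with
    | inl q =>
      show Wt _ _ = ch (2 * (n : ℤ) - 2 * k t) ((n : ℤ) - k t - ((q : ℤ) + 1) + 1)
          + ch (2 * (n : ℤ) - 2 * k t) ((n : ℤ) - k t - ((q : ℤ) + 1))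
      refine Wt_eq_gen ?_ ?_ ?_ ?_ ?_
      · simp only [startPt4]; omega
      · simp only [endPt4]; omega
      · simp only [startPt4, endPt4, lev]; ring
      · rw [ch_symm]; exact congrArg _ (by simp only [startPt4, endPt4, lev]; ring)
      · rw [ch_symm]; exact congrArg _ (by simp only [startPt4, endPt4, lev]; ring)
    | inr t' =>
      show Wt _ _ = ch (2 * (n : ℤ) - 2 * k t - 2 * k t') ((n : ℤ) - k t - k t')
          + ch (2 * (n : ℤ) - 2 * k t - 2 * k t') ((n : ℤ) - k t - k t' - 1)
      refine Wt_eq_gen ?_ ?_ ?_ ?_ ?_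
      · simp only [startPt4]; omega
      · simp only [endPt4]; omega
      · simp only [startPt4, endPt4, lev]; ring
      · exact congrArg _ (by simp only [startPt4, endPt4]; ring)
      · rw [ch_symm]; exact congrArg _ (by simp only [startPt4, endPt4, lev]; ring)


end Assembly

end LP

open LP

/-- **Proposition 3.4**: the generating function, with weight
`2^(number of touchings of the main diagonal)`, of the families of non-intersecting
lattice paths from the `A`'s and `B`'s to the `E`'s staying weakly below the main
diagonal `x = y`, is given by `det N`. -/
theorem weighted_path_count_eq_determinant
    (n m l : ℕ) (hn : 0 < n) (hm : 0 < m) (hl : 0 < l)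
    (k : Fin l → ℤ) (hkpos : ∀ t, 0 < k t) (hkmono : StrictMono k)
    (hkbd : ∀ t, 2 * k t ≤ (n : ℤ)) :
    ∑ᶠ F : (Fam4 n m l k), (2 : ℤ) ^ touchCount F.1 = (Nmat n m l k).det := by
  classical
  set st := startPt4 m l k with hstdef
  set en := endPt4 n m l k with hendef
  set GS : Finset (QIdx m l → List (ℤ × ℤ)) :=
    (FamsF st en 1).filter (fun F => ¬(badSet F).Nonempty) with hGSdef
  -- RHS computation
  have hdet1 : (Nmat n m l k).det
      = ∑ σ : Equiv.Perm (QIdx m l),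
          ((Equiv.Perm.sign σ : ℤˣ) : ℤ) * ∑ F ∈ FamsF st en σ, wprod F := by
    rw [Matrix.det_apply']
    have step1 : ∀ σ : Equiv.Perm (QIdx m l),
        (∏ i, Nmat n m l k (σ i) i) = ∏ i, Wt (st i) (en (σ⁻¹ i)) := by
      intro σ
      rw [← Equiv.prod_comp σ (fun j => Wt (st j) (en (σ⁻¹ j)))]
      refine Finset.prod_congr rfl (fun i _ => ?_)
      rw [Equiv.Perm.inv_def, Equiv.symm_apply_apply]
      exact (entry_eq n m l k (σ i) i).symm
    calc (∑ σ : Equiv.Perm (QIdx m l),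
            ((Equiv.Perm.sign σ : ℤˣ) : ℤ) * ∏ i, Nmat n m l k (σ i) i)
        = ∑ σ : Equiv.Perm (QIdx m l),
            ((Equiv.Perm.sign σ : ℤˣ) : ℤ) * ∏ i, Wt (st i) (en (σ⁻¹ i)) :=
          Finset.sum_congr rfl (fun σ _ => by rw [step1])
      _ = ∑ σ : Equiv.Perm (QIdx m l),
            ((Equiv.Perm.sign σ : ℤˣ) : ℤ) * ∏ i, Wt (st i) (en (σ i)) := by
          apply Fintype.sum_equiv (Equiv.inv (Equiv.Perm (QIdx m l)))
          intro σ
          simp only [Equiv.inv_apply]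
          rw [Equiv.Perm.sign_inv]
      _ = ∑ σ : Equiv.Perm (QIdx m l),
            ((Equiv.Perm.sign σ : ℤˣ) : ℤ) * ∑ F ∈ FamsF st en σ, wprod F := by
          refine Finset.sum_congr rfl (fun σ _ => ?_)
          congr 1
          exact Finset.prod_univ_sum (fun i => PBF (st i) (en (σ i))) (fun i P => pw P)
  -- split into intersecting and non-intersecting parts
  have hdet2 : (Nmat n m l k).det
      = (∑ σ : Equiv.Perm (QIdx m l), ∑ F ∈ (FamsF st en σ).filter
            (fun F => (badSet F).Nonempty), ((Equiv.Perm.sign σ : ℤˣ) : ℤ) * wprod F)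
        + ∑ σ : Equiv.Perm (QIdx m l), ((Equiv.Perm.sign σ : ℤˣ) : ℤ) *
            ∑ F ∈ (FamsF st en σ).filter (fun F => ¬(badSet F).Nonempty), wprod F := by
    rw [hdet1, ← Finset.sum_add_distrib]
    refine Finset.sum_congr rfl (fun σ _ => ?_)
    rw [← Finset.sum_filter_add_sum_filter_not (FamsF st en σ)
      (fun F => (badSet F).Nonempty) wprod, mul_add, Finset.mul_sum]
  -- the intersecting part cancels
  have hbad : (∑ σ : Equiv.Perm (QIdx m l), ∑ F ∈ (FamsF st en σ).filter
      (fun F => (badSet F).Nonempty), ((Equiv.Perm.sign σ : ℤˣ) : ℤ) * wprod F) = 0 := by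
    rw [Finset.sum_sigma' Finset.univ
      (fun σ => (FamsF st en σ).filter (fun F => (badSet F).Nonempty))
      (fun σ F => ((Equiv.Perm.sign σ : ℤˣ) : ℤ) * wprod F)]
    exact cancel_bad st en
  -- only the identity contributes to the non-intersecting part
  have hgood : (∑ σ : Equiv.Perm (QIdx m l), ((Equiv.Perm.sign σ : ℤˣ) : ℤ) *
      ∑ F ∈ (FamsF st en σ).filter (fun F => ¬(badSet F).Nonempty), wprod F)
      = ∑ F ∈ GS, wprod F := by
    rw [Finset.sum_eq_single_of_mem 1 (Finset.mem_univ _)]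
    · simp only [Equiv.Perm.sign_one, Units.val_one, one_mul]
      rfl
    · intro σ _ hσ
      have hempty : (FamsF st en σ).filter (fun F => ¬(badSet F).Nonempty) = ∅ := by
        rw [Finset.filter_eq_empty_iff]
        intro F hFa hFb
        apply hσ
        have hF : ∀ i, F i ∈ PB (st i) (en (σ i)) := mem_FamsF.mp hFa
        have hNI : ∀ i j, i ≠ j → ∀ p ∈ F i, p ∉ F j := by
          intro i j hij p hpi hpj
          exact hFb ⟨i, Finset.mem_filter.mpr
            ⟨Finset.mem_univ _, p, hpi, j, Ne.symm hij, hpj⟩⟩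
        exact sigma_eq_one hkpos hkmono hkbd σ F hF hNI
      rw [hempty]
      simp
  -- identification of the left-hand side
  have hFam : Fam4 n m l k = ↑GS := by
    ext F
    simp only [Fam4, Set.mem_setOf_eq, hGSdef, Finset.coe_filter, Set.mem_setOf_eq]
    constructor
    · rintro ⟨h1, h2⟩
      refine ⟨mem_FamsF.mpr (fun i => ?_), ?_⟩
      · exact ⟨(h1 i).1, (h1 i).2.1, (h1 i).2.2.1, (h1 i).2.2.2⟩
      · rintro ⟨i, hi⟩
        rw [badSet, Finset.mem_filter] at hi
        obtain ⟨-, p, hp, j, hj, hpj⟩ := hi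
        exact h2 i j (Ne.symm hj) p hp hpj
    · rintro ⟨h1, h2⟩
      have hF := mem_FamsF.mp h1
      refine ⟨fun i => ⟨(hF i).1, (hF i).2.1, (hF i).2.2.1, (hF i).2.2.2⟩, ?_⟩
      intro i j hij p hpi hpj
      exact h2 ⟨i, Finset.mem_filter.mpr ⟨Finset.mem_univ _, p, hpi, j, Ne.symm hij, hpj⟩⟩
  have hLHS : (∑ᶠ F : (Fam4 n m l k), (2 : ℤ) ^ touchCount F.1) = ∑ F ∈ GS, wprod F := by
    have e1 := finsum_set_coe_eq_finsum_mem
      (f := fun G : QIdx m l → List (ℤ × ℤ) => (2 : ℤ) ^ touchCount G) (Fam4 n m l k)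
    rw [e1, hFam, finsum_mem_coe_finset]
    refine Finset.sum_congr rfl (fun F _ => ?_)
    rw [touchCount, ← Finset.prod_pow_eq_pow_sum]
    rfl
  rw [hLHS, hdet2, hbad, hgood, zero_add]
end

section
/- Let G = (V, E) be a directed acyclic graph with a weight function w on its edges taking values in a commutative ring, and let u_1, ..., u_p and v_1, ..., v_p be vertices such that for all i, j there are only finitely many directed paths from u_j to v_i. Assume that the only permutation π of {1,...,p} for which there exists a family (P_1, ..., P_p) of pairwise vertex-disjoint directed paths with P_i running from u_i to v_{π(i)} is the identity permutation. Then the sum of Π_{i=1}^p w(P_i) over all families (P_1, ..., P_p) of pairwise vertex-disjoint directed paths with P_i running from u_i to v_i equals det_{1 ≤ i,j ≤ p} ( GF(P(u_j → v_i); w) ), where GF(P(u → v); w) is the sum of w(P) over all directed paths P from u to v. -/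
/-- A directed path in the directed graph with adjacency relation `adjE`: a nonempty
list of vertices with each consecutive pair joined by a directed edge. -/
def IsDPath {V : Type*} (adjE : V → V → Prop) (L : List V) : Prop :=
  L ≠ [] ∧ L.Chain' adjE

/-- The weight of a directed path: the product of the weights of its edges. -/
def pathWeight {V R : Type*} [CommRing R] (w : V → V → R) (L : List V) : R :=
  ((L.zip L.tail).map (fun e => w e.1 e.2)).prod

section helpers
variable {V : Type*} {R : Type*} [CommRing R]

lemma chain_transGen {r : V → V → Prop} {b : V} {l : List V} :
    ∀ {a : V}, List.Chain r a l → b ∈ l → Relation.TransGen r a b := by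
  induction l with
  | nil => intro a _ hb; simp at hb
  | cons c l ih =>
    intro a h hb
    rw [List.Chain, List.isChain_cons_cons] at h
    rcases List.mem_cons.1 hb with rfl | hb
    · exact Relation.TransGen.single h.1
    · exact Relation.TransGen.head h.1 (ih h.2 hb)

lemma chain'_nodup {r : V → V → Prop} (hacyclic : ∀ a : V, ¬ Relation.TransGen r a a) :
    ∀ {L : List V}, List.Chain' r L → L.Nodup := by
  intro L
  induction L with
  | nil => simp
  | cons a l ih =>
    intro h
    have hc : List.Chain r a l := h
    refine List.nodup_cons.2 ⟨fun hmem => hacyclic a (chain_transGen hc hmem), ih (List.isChain_cons.1 h).2⟩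

lemma pathWeight_nil (w : V → V → R) : pathWeight w ([] : List V) = 1 := by simp [pathWeight]

lemma pathWeight_single (w : V → V → R) (x : V) : pathWeight w [x] = 1 := by simp [pathWeight]

lemma pathWeight_cons_cons (w : V → V → R) (a b : V) (L : List V) :
    pathWeight w (a :: b :: L) = w a b * pathWeight w (b :: L) := by
  simp [pathWeight]

lemma pathWeight_split (w : V → V → R) (x : V) (B : List V) :
    ∀ (A : List V), pathWeight w (A ++ x :: B) = pathWeight w (A ++ [x]) * pathWeight w (x :: B) := by
  intro A
  induction A with
  | nil => simp [pathWeight_single]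
  | cons a A ih =>
    cases A with
    | nil => simp [pathWeight_cons_cons, pathWeight_single]
    | cons a' A' =>
      simp only [List.cons_append, pathWeight_cons_cons] at *
      rw [ih]; ring

lemma exists_first_split {P : V → Prop} [DecidablePred P] :
    ∀ {L : List V}, (∃ a ∈ L, P a) →
      ∃ A x B, L = A ++ x :: B ∧ P x ∧ ∀ a ∈ A, ¬ P a := by
  intro L
  induction L with
  | nil => intro h; simp at h
  | cons c l ih =>
    intro h
    by_cases hc : P c
    · exact ⟨[], c, l, by simp, hc, by simp⟩
    · have : ∃ a ∈ l, P a := by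
        rcases h with ⟨a, ha, hPa⟩
        rcases List.mem_cons.1 ha with rfl | ha
        · exact absurd hPa hc
        · exact ⟨a, ha, hPa⟩
      rcases ih this with ⟨A, x, B, hL, hPx, hA⟩
      exact ⟨c :: A, x, B, by simp [hL], hPx, by
        intro a ha; rcases List.mem_cons.1 ha with rfl | ha
        · exact hc
        · exact hA a ha⟩

lemma first_split_unique {P : V → Prop} :
    ∀ {A A' : List V} {x x' : V} {B B' : List V},
      (∀ a ∈ A, ¬ P a) → P x → (∀ a ∈ A', ¬ P a) → P x' →
      A ++ x :: B = A' ++ x' :: B' → A = A' ∧ x = x' ∧ B = B' := by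
  intro A
  induction A with
  | nil =>
    intro A' x x' B B' _ hx hA' hx' heq
    cases A' with
    | nil => simpa using heq
    | cons a' A'' =>
      simp only [List.nil_append, List.cons_append, List.cons.injEq] at heq
      exact absurd (heq.1 ▸ hx) (hA' a' (by simp))
  | cons a A ih =>
    intro A' x x' B B' hA hx hA' hx' heq
    cases A' with
    | nil =>
      simp only [List.nil_append, List.cons_append, List.cons.injEq] at heq
      exact absurd (heq.1 ▸ hx') (hA a (by simp))
    | cons a' A'' =>
      simp only [List.cons_append, List.cons.injEq] at heq
      obtain ⟨rfl, heq⟩ := heq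
      obtain ⟨h1, h2, h3⟩ := ih (fun b hb => hA b (by simp [hb])) hx
        (fun b hb => hA' b (by simp [hb])) hx' heq
      exact ⟨by rw [h1], h2, h3⟩

end helpers
section helpers
variable {V : Type*} {R : Type*} [CommRing R]

lemma chain'_glue {r : V → V → Prop} {A B D : List V} {x : V}
    (h1 : List.Chain' r (A ++ x :: B)) (h2 : List.Chain' r (x :: D)) :
    List.Chain' r (A ++ x :: D) := by
  rw [List.Chain', List.isChain_append] at h1 ⊢
  exact ⟨h1.1, h2, by simpa using h1.2.2⟩

lemma head?_glue {A B D : List V} {x : V} :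
    (A ++ x :: B).head? = (A ++ x :: D).head? := by
  cases A <;> simp

lemma getLast?_split {A B : List V} {x : V} :
    (A ++ x :: B).getLast? = (x :: B).getLast? := by
  exact List.getLast?_append_cons A x B

end helpers

def GVspec {V : Type*} {p : ℕ} (a b : Equiv.Perm (Fin p) × (Fin p → List V)) : Prop :=
  ∃ i j : Fin p, ∃ x : V, ∃ A B C D : List V,
    i < j ∧
    b.1 = a.1 * Equiv.swap i j ∧
    a.2 i = A ++ x :: B ∧
    a.2 j = C ++ x :: D ∧
    b.2 i = A ++ x :: D ∧
    b.2 j = C ++ x :: B ∧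
    (∀ k, k ≠ i → k ≠ j → b.2 k = a.2 k) ∧
    (∀ k, k < i → ∀ l, l ≠ k → ∀ y ∈ a.2 k, y ∉ a.2 l) ∧
    (∀ y ∈ A, ∀ l, l ≠ i → y ∉ a.2 l) ∧
    (∀ l, l ≠ i → x ∈ a.2 l → j ≤ l) ∧
    (∀ y ∈ C, y ≠ x)

section gv
variable {V : Type*} {p : ℕ}

lemma gvspec_unique {a b b' : Equiv.Perm (Fin p) × (Fin p → List V)}
    (h : GVspec a b) (h' : GVspec a b') : b = b' := by
  obtain ⟨i, j, x, A, B, C, D, hij, hb1, hai, haj, hbi, hbj, hbk, hmin, hA, hjmin, hC⟩ := h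
  obtain ⟨i', j', x', A', B', C', D', hij', hb1', hai', haj', hbi', hbj', hbk', hmin', hA', hjmin', hC'⟩ := h'
  -- i = i'
  have hxi : x ∈ a.2 i := by rw [hai]; simp
  have hxj : x ∈ a.2 j := by rw [haj]; simp
  have hxi' : x' ∈ a.2 i' := by rw [hai']; simp
  have hxj' : x' ∈ a.2 j' := by rw [haj']; simp
  have hii : i = i' := by
    by_contra hne
    rcases lt_or_gt_of_ne hne with hlt | hlt
    · exact hmin' i hlt j hij.ne' x hxi hxj
    · exact hmin i' hlt j' hij'.ne' x' hxi' hxj'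
  subst hii
  -- x = x', A = A', B = B'
  have hsplit := first_split_unique (P := fun y => ∃ l, l ≠ i ∧ y ∈ a.2 l)
    (fun y hy => by rintro ⟨l, hl, hyl⟩; exact hA y hy l hl hyl)
    ⟨j, hij.ne', hxj⟩
    (fun y hy => by rintro ⟨l, hl, hyl⟩; exact hA' y hy l hl hyl)
    ⟨j', hij'.ne', hxj'⟩
    (hai ▸ hai')
  obtain ⟨hAA, hxx, hBB⟩ := hsplit
  subst hxx; subst hAA; subst hBB
  -- j = j'
  have hjj : j = j' := le_antisymm (hjmin j' hij'.ne' hxj') (hjmin' j hij.ne' hxj)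
  subst hjj
  -- C = C', D = D'
  have hsplit2 := first_split_unique (P := fun y => y = x)
    hC rfl hC' rfl (haj ▸ haj')
  obtain ⟨hCC, -, hDD⟩ := hsplit2
  subst hCC; subst hDD
  -- conclude
  have h1 : b.1 = b'.1 := by rw [hb1, hb1']
  have h2 : b.2 = b'.2 := by
    funext k
    by_cases hk : k = i
    · subst hk; rw [hbi, hbi']
    · by_cases hk' : k = j
      · subst hk'; rw [hbj, hbj']
      · rw [hbk k hk hk', hbk' k hk hk']
  exact Prod.ext h1 h2

lemma gvspec_symm {a b : Equiv.Perm (Fin p) × (Fin p → List V)}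
    (hnodup : ∀ k, (a.2 k).Nodup) (h : GVspec a b) : GVspec b a := by
  obtain ⟨i, j, x, A, B, C, D, hij, hb1, hai, haj, hbi, hbj, hbk, hmin, hA, hjmin, hC⟩ := h
  have hsub : ∀ l, ∀ y ∈ b.2 l, y ∈ a.2 l ∨ y ∈ a.2 i ∨ y ∈ a.2 j := by
    intro l y hy
    by_cases hl : l = i
    · subst hl
      rw [hbi] at hy
      rcases List.mem_append.1 hy with hy | hy
      · right; left; rw [hai]; simp [hy]
      · rcases List.mem_cons.1 hy with rfl | hy
        · right; left; rw [hai]; simp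
        · right; right; rw [haj]; simp [hy]
    · by_cases hl' : l = j
      · subst hl'
        rw [hbj] at hy
        rcases List.mem_append.1 hy with hy | hy
        · right; right; rw [haj]; simp [hy]
        · rcases List.mem_cons.1 hy with rfl | hy
          · right; right; rw [haj]; simp
          · right; left; rw [hai]; simp [hy]
      · left; rwa [hbk l hl hl'] at hy
  have hAB : ∀ y ∈ A, y ∉ x :: B := by
    have := hnodup i
    rw [hai, List.nodup_append'] at this
    exact fun y hy => this.2.2 hy
  refine ⟨i, j, x, A, D, C, B, hij, ?_, hbi, hbj, hai, haj,
    fun k hk hk' => (hbk k hk hk').symm, ?_, ?_, ?_, hC⟩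
  · rw [hb1, mul_assoc, Equiv.swap_mul_self, mul_one]
  · intro k hk l hl y hy hyl
    have hki : k ≠ i := hk.ne
    have hkj : k ≠ j := (hk.trans hij).ne
    rw [hbk k hki hkj] at hy
    rcases hsub l y hyl with h' | h' | h'
    · exact hmin k hk l hl y hy h'
    · exact hmin k hk i (Ne.symm hki) y hy h'
    · exact hmin k hk j (Ne.symm hkj) y hy h'
  · intro y hy l hl
    by_cases hlj : l = j
    · subst hlj
      rw [hbj]
      intro hmem
      rcases List.mem_append.1 hmem with h' | h'
      · exact hA y hy _ hij.ne' (by rw [haj]; simp [h'])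
      · exact hAB y hy h'
    · rw [hbk l hl hlj]
      exact hA y hy l hl
  · intro l hl hx
    by_cases hlj : l = j
    · exact hlj.ge
    · rw [hbk l hl hlj] at hx
      exact hjmin l hl hx

lemma gvspec_weight {R : Type*} [CommRing R] (w : V → V → R)
    {a b : Equiv.Perm (Fin p) × (Fin p → List V)} (h : GVspec a b) :
    ∏ k, pathWeight w (b.2 k) = ∏ k, pathWeight w (a.2 k) := by
  obtain ⟨i, j, x, A, B, C, D, hij, hb1, hai, haj, hbi, hbj, hbk, -, -, -, -⟩ := h
  have hjmem : j ∈ Finset.univ.erase i := Finset.mem_erase.2 ⟨hij.ne', Finset.mem_univ j⟩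
  have key : ∀ H : Fin p → List V,
      ∏ k, pathWeight w (H k) = pathWeight w (H i) * (pathWeight w (H j) *
        ∏ k ∈ (Finset.univ.erase i).erase j, pathWeight w (H k)) := by
    intro H
    rw [← Finset.mul_prod_erase Finset.univ (fun k => pathWeight w (H k)) (Finset.mem_univ i),
      ← Finset.mul_prod_erase (Finset.univ.erase i) (fun k => pathWeight w (H k)) hjmem]
  rw [key, key]
  have hrest : ∏ k ∈ (Finset.univ.erase i).erase j, pathWeight w (b.2 k)
      = ∏ k ∈ (Finset.univ.erase i).erase j, pathWeight w (a.2 k) := by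
    refine Finset.prod_congr rfl fun k hk => ?_
    rw [Finset.mem_erase, Finset.mem_erase] at hk
    rw [hbk k hk.2.1 hk.1]
  rw [hrest, hbi, hbj, hai, haj, pathWeight_split w x D A, pathWeight_split w x B C,
    pathWeight_split w x B A, pathWeight_split w x D C]
  ring

lemma gvspec_sign {a b : Equiv.Perm (Fin p) × (Fin p → List V)} (h : GVspec a b) :
    Equiv.Perm.sign b.1 = - Equiv.Perm.sign a.1 ∧ b.1 ≠ a.1 := by
  obtain ⟨i, j, x, A, B, C, D, hij, hb1, -, -, -, -, -, -, -, -, -⟩ := h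
  constructor
  · rw [hb1, Equiv.Perm.sign_mul, Equiv.Perm.sign_swap hij.ne, mul_neg_one]
  · intro heq
    rw [hb1] at heq
    have : a.1 (Equiv.swap i j i) = a.1 i := by
      conv_rhs => rw [← heq]
      rfl
    rw [Equiv.swap_apply_left] at this
    exact hij.ne' (a.1.injective this)

lemma gvspec_exists {U W : Type*} (adjE : V → V → Prop) (u v : Fin p → V)
    (hacyclic : ∀ a : V, ¬ Relation.TransGen adjE a a)
    (a : Equiv.Perm (Fin p) × (Fin p → List V))
    (hval : ∀ k, IsDPath adjE (a.2 k) ∧ (a.2 k).head? = some (u k) ∧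
      (a.2 k).getLast? = some (v (a.1 k)))
    (hndisj : ¬ ∀ i j, i ≠ j → ∀ y ∈ a.2 i, y ∉ a.2 j) :
    ∃ b, GVspec a b ∧ (∀ k, IsDPath adjE (b.2 k) ∧ (b.2 k).head? = some (u k) ∧
      (b.2 k).getLast? = some (v (b.1 k))) ∧
      ¬ ∀ i j, i ≠ j → ∀ y ∈ b.2 i, y ∉ b.2 j := by
  classical
  push_neg at hndisj
  obtain ⟨i₁, j₁, hne₁, y₁, hy₁, hy₁'⟩ := hndisj
  set F := a.2 with hF
  -- the set of "bad" indices
  set Bad : Finset (Fin p) :=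
    Finset.univ.filter (fun k => ∃ l, l ≠ k ∧ ∃ z ∈ F k, z ∈ F l) with hBadDef
  have hBadne : Bad.Nonempty := ⟨i₁, by
    simp only [hBadDef, Finset.mem_filter, Finset.mem_univ, true_and]
    exact ⟨j₁, Ne.symm hne₁, y₁, hy₁, hy₁'⟩⟩
  set i0 := Bad.min' hBadne with hi0def
  have hi0Bad : i0 ∈ Bad := Bad.min'_mem hBadne
  have hi0min : ∀ k, k < i0 → ∀ l, l ≠ k → ∀ y ∈ F k, y ∉ F l := by
    intro k hk l hl y hy hyl
    have : k ∈ Bad := by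
      simp only [hBadDef, Finset.mem_filter, Finset.mem_univ, true_and]
      exact ⟨l, hl, y, hy, hyl⟩
    exact absurd (Bad.min'_le k this) (not_le.2 hk)
  -- first vertex x on F i0 lying on another path
  have hex : ∃ z ∈ F i0, ∃ l, l ≠ i0 ∧ z ∈ F l := by
    simp only [hBadDef, Finset.mem_filter, Finset.mem_univ, true_and] at hi0Bad
    obtain ⟨l, hl, z, hz, hzl⟩ := hi0Bad
    exact ⟨z, hz, l, hl, hzl⟩
  obtain ⟨A, x, B, hFi0, hPx, hAprop⟩ :=
    exists_first_split (P := fun z => ∃ l, l ≠ i0 ∧ z ∈ F l) hex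
  have hxFi0 : x ∈ F i0 := by rw [hFi0]; simp
  -- least other index j0 containing x
  set J : Finset (Fin p) := Finset.univ.filter (fun l => l ≠ i0 ∧ x ∈ F l) with hJdef
  have hJne : J.Nonempty := by
    obtain ⟨l, hl, hxl⟩ := hPx
    exact ⟨l, by simp [hJdef, hl, hxl]⟩
  set j0 := J.min' hJne with hj0def
  have hj0J : j0 ∈ J := J.min'_mem hJne
  have hj0ne : j0 ≠ i0 := by
    simp only [hJdef, Finset.mem_filter, Finset.mem_univ, true_and] at hj0J
    exact hj0J.1
  have hxFj0 : x ∈ F j0 := by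
    simp only [hJdef, Finset.mem_filter, Finset.mem_univ, true_and] at hj0J
    exact hj0J.2
  have hj0min : ∀ l, l ≠ i0 → x ∈ F l → j0 ≤ l := by
    intro l hl hxl
    exact J.min'_le l (by simp [hJdef, hl, hxl])
  have hij : i0 < j0 := by
    have : i0 ≤ j0 := Bad.min'_le j0 (by
      simp only [hBadDef, Finset.mem_filter, Finset.mem_univ, true_and]
      exact ⟨i0, Ne.symm hj0ne, x, hxFj0, hxFi0⟩)
    exact lt_of_le_of_ne this (Ne.symm hj0ne)
  -- split F j0 at x
  obtain ⟨C, x', D, hFj0, hx', hCprop⟩ :=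
    exists_first_split (P := fun z => z = x) ⟨x, hxFj0, rfl⟩
  rw [hx'] at hFj0
  have hCprop : ∀ y ∈ C, y ≠ x := fun y hy => hx' ▸ hCprop y hy
  -- build the new family
  set G : Fin p → List V :=
    Function.update (Function.update F i0 (A ++ x :: D)) j0 (C ++ x :: B) with hGdef
  have hGi0 : G i0 = A ++ x :: D := by
    rw [hGdef, Function.update_of_ne (Ne.symm hj0ne), Function.update_self]
  have hGj0 : G j0 = C ++ x :: B := by
    rw [hGdef, Function.update_self]
  have hGk : ∀ k, k ≠ i0 → k ≠ j0 → G k = F k := by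
    intro k hk hk'
    rw [hGdef, Function.update_of_ne hk', Function.update_of_ne hk]
  set τ := a.1 * Equiv.swap i0 j0 with hτ
  refine ⟨(τ, G), ?_, ?_, ?_⟩
  · exact ⟨i0, j0, x, A, B, C, D, hij, rfl, hFi0, hFj0, hGi0, hGj0, hGk, hi0min,
      (fun y hy l hl hyl => hAprop y hy ⟨l, hl, hyl⟩), hj0min, hCprop⟩
  · -- validity of the new family
    have hchain_i : List.Chain' adjE (A ++ x :: B) := hFi0 ▸ (hval i0).1.2
    have hchain_j : List.Chain' adjE (C ++ x :: D) := hFj0 ▸ (hval j0).1.2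
    have hchainD : List.Chain' adjE (x :: D) := (List.isChain_append.1 hchain_j).2.1
    have hchainB : List.Chain' adjE (x :: B) := (List.isChain_append.1 hchain_i).2.1
    intro k
    show IsDPath adjE (G k) ∧ (G k).head? = some (u k) ∧ (G k).getLast? = some (v (τ k))
    by_cases hk : k = i0
    · subst hk
      have hτk : τ i0 = a.1 j0 := by
        rw [hτ]; simp [Equiv.swap_apply_left]
      refine ⟨⟨by simp [hGi0], by rw [hGi0]; exact chain'_glue hchain_i hchainD⟩, ?_, ?_⟩
      · rw [hGi0, ← head?_glue (B := B), ← hFi0]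
        exact (hval i0).2.1
      · rw [hGi0, getLast?_split, ← getLast?_split (A := C), ← hFj0, hτk]
        exact (hval j0).2.2
    · by_cases hk' : k = j0
      · subst hk'
        have hτk : τ j0 = a.1 i0 := by
          rw [hτ]; simp [Equiv.swap_apply_right]
        refine ⟨⟨by simp [hGj0], by rw [hGj0]; exact chain'_glue hchain_j hchainB⟩, ?_, ?_⟩
        · rw [hGj0, ← head?_glue (B := D), ← hFj0]
          exact (hval j0).2.1
        · rw [hGj0, getLast?_split, ← getLast?_split (A := A), ← hFi0, hτk]
          exact (hval i0).2.2
      · have hτk : τ k = a.1 k := by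
          rw [hτ]; simp [Equiv.swap_apply_of_ne_of_ne hk hk']
        rw [hGk k hk hk', hτk]
        exact hval k
  · -- still not disjoint
    push_neg
    exact ⟨i0, j0, Ne.symm hj0ne, x, by show x ∈ G i0; rw [hGi0]; simp,
      by show x ∈ G j0; rw [hGj0]; simp⟩

end gv

/-- **Theorem 3.3 (Lindström, Gessel–Viennot)**: for a weighted directed acyclic graph
and vertices `u 1, …, u p`, `v 1, …, v p` such that there are finitely many paths from
each `u j` to each `v i`, if the only permutation `π` admitting a family of pairwise
vertex-disjoint paths from the `u i` to the `v (π i)` is the identity, then the sum of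
the weights of the families of pairwise vertex-disjoint paths from the `u i` to the
`v i` equals `det (GF(P(u j → v i); w))_{1 ≤ i, j ≤ p}`. -/
theorem lindstrom_gessel_viennot {V R : Type*} [CommRing R]
    (adjE : V → V → Prop) (w : V → V → R) (p : ℕ) (u v : Fin p → V)
    (hacyclic : ∀ a : V, ¬ Relation.TransGen adjE a a)
    (hfin : ∀ i j : Fin p,
      {L : List V | IsDPath adjE L ∧ L.head? = some (u j) ∧ L.getLast? = some (v i)}.Finite)
    (honly : ∀ π : Equiv.Perm (Fin p),
      (∃ F : Fin p → List V,
          (∀ i, IsDPath adjE (F i) ∧ (F i).head? = some (u i) ∧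
            (F i).getLast? = some (v (π i))) ∧
          (∀ i j, i ≠ j → ∀ a ∈ F i, a ∉ F j)) → π = 1) :
    ∑ᶠ F : {F : Fin p → List V //
        (∀ i, IsDPath adjE (F i) ∧ (F i).head? = some (u i) ∧
          (F i).getLast? = some (v i)) ∧
        (∀ i j, i ≠ j → ∀ a ∈ F i, a ∉ F j)},
      ∏ i : Fin p, pathWeight w (F.1 i)
    = Matrix.det (fun i j : Fin p =>
        ∑ᶠ L : {L : List V // IsDPath adjE L ∧ L.head? = some (u j) ∧
            L.getLast? = some (v i)}, pathWeight w L.1) := by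
  classical
  set Pf : Fin p → Fin p → Finset (List V) := fun i j => (hfin i j).toFinset with hPf
  have hPmem : ∀ i j L, L ∈ Pf i j ↔ IsDPath adjE L ∧ L.head? = some (u j) ∧
      L.getLast? = some (v i) := fun i j L => Set.Finite.mem_toFinset _
  set T : Equiv.Perm (Fin p) → Finset (Fin p → List V) :=
    fun σ => Fintype.piFinset (fun i => Pf (σ i) i) with hT
  have hTmem : ∀ σ F, F ∈ T σ ↔ ∀ i, IsDPath adjE (F i) ∧ (F i).head? = some (u i) ∧
      (F i).getLast? = some (v (σ i)) := by
    intro σ F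
    rw [hT, Fintype.mem_piFinset]
    exact forall_congr' (fun i => hPmem _ _ _)
  set Disj : (Fin p → List V) → Prop :=
    fun F => ∀ i j, i ≠ j → ∀ a ∈ F i, a ∉ F j with hDisj
  -- rewrite matrix entries as finite sums
  have hM : (fun i j : Fin p => ∑ᶠ L : {L : List V // IsDPath adjE L ∧
        L.head? = some (u j) ∧ L.getLast? = some (v i)}, pathWeight w L.1)
      = fun i j => ∑ L ∈ Pf i j, pathWeight w L := by
    funext i j
    haveI : Fintype {L : List V // IsDPath adjE L ∧ L.head? = some (u j) ∧
        L.getLast? = some (v i)} := (hfin i j).fintype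
    rw [finsum_eq_sum_of_fintype]
    exact (Finset.sum_subtype (Pf i j) (fun L => hPmem i j L) (pathWeight w)).symm
  rw [hM]
  erw [Matrix.det_apply]
  -- expand the product of sums
  have hdet : ∑ σ : Equiv.Perm (Fin p), Equiv.Perm.sign σ •
        ∏ i, (fun i j => ∑ L ∈ Pf i j, pathWeight w L) (σ i) i
      = ∑ σ : Equiv.Perm (Fin p), ∑ F ∈ T σ,
          Equiv.Perm.sign σ • ∏ i, pathWeight w (F i) := by
    refine Finset.sum_congr rfl fun σ _ => ?_
    rw [show (∏ i, (fun i j => ∑ L ∈ Pf i j, pathWeight w L) (σ i) i)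
        = ∑ F ∈ T σ, ∏ i, pathWeight w (F i) from
      Finset.prod_univ_sum (fun i => Pf (σ i) i) (fun _ L => pathWeight w L),
      Finset.smul_sum]
  rw [hdet]
  -- split into disjoint and non-disjoint families
  have hsplit : ∀ σ : Equiv.Perm (Fin p), ∑ F ∈ T σ,
        Equiv.Perm.sign σ • ∏ i, pathWeight w (F i)
      = (∑ F ∈ (T σ).filter Disj, Equiv.Perm.sign σ • ∏ i, pathWeight w (F i))
        + ∑ F ∈ (T σ).filter (fun F => ¬ Disj F),
            Equiv.Perm.sign σ • ∏ i, pathWeight w (F i) := by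
    intro σ
    exact (Finset.sum_filter_add_sum_filter_not (T σ) Disj _).symm
  simp_rw [hsplit, Finset.sum_add_distrib]
  -- the non-disjoint part cancels
  have hzero : ∑ σ : Equiv.Perm (Fin p), ∑ F ∈ (T σ).filter (fun F => ¬ Disj F),
      Equiv.Perm.sign σ • ∏ i, pathWeight w (F i) = 0 := by
    rw [Finset.sum_sigma' Finset.univ (fun σ => (T σ).filter (fun F => ¬ Disj F))
      (fun σ F => Equiv.Perm.sign σ • ∏ i, pathWeight w (F i))]
    set s := Finset.univ.sigma (fun σ : Equiv.Perm (Fin p) =>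
      (T σ).filter (fun F => ¬ Disj F)) with hs
    have hmem : ∀ x : (_ : Equiv.Perm (Fin p)) × (Fin p → List V), x ∈ s →
        (∀ k, IsDPath adjE (x.2 k) ∧ (x.2 k).head? = some (u k) ∧
          (x.2 k).getLast? = some (v (x.1 k))) ∧ ¬ Disj x.2 := by
      intro x hx
      rw [hs, Finset.mem_sigma] at hx
      obtain ⟨-, hx⟩ := hx
      rw [Finset.mem_filter] at hx
      exact ⟨(hTmem x.1 x.2).1 hx.1, hx.2⟩
    have key : ∀ x : (_ : Equiv.Perm (Fin p)) × (Fin p → List V), x ∈ s →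
        ∃ b : Equiv.Perm (Fin p) × (Fin p → List V), GVspec (x.1, x.2) b ∧
          (∀ k, IsDPath adjE (b.2 k) ∧ (b.2 k).head? = some (u k) ∧
            (b.2 k).getLast? = some (v (b.1 k))) ∧
          ¬ ∀ i j, i ≠ j → ∀ y ∈ b.2 i, y ∉ b.2 j := by
      intro x hx
      exact gvspec_exists (U := Unit) (W := Unit) adjE u v hacyclic (x.1, x.2)
        (hmem x hx).1 (hmem x hx).2
    set g : ∀ x : (_ : Equiv.Perm (Fin p)) × (Fin p → List V), x ∈ s →
        (_ : Equiv.Perm (Fin p)) × (Fin p → List V) :=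
      fun x hx => ⟨((key x hx).choose).1, ((key x hx).choose).2⟩ with hg
    have hnodup : ∀ x : (_ : Equiv.Perm (Fin p)) × (Fin p → List V), x ∈ s →
        ∀ k, ((x.1, x.2).2 k).Nodup := by
      intro x hx k
      exact chain'_nodup hacyclic ((hmem x hx).1 k).1.2
    have g_mem : ∀ x (hx : x ∈ s), g x hx ∈ s := by
      intro x hx
      obtain ⟨hspec, hval, hnd⟩ := (key x hx).choose_spec
      rw [hs, Finset.mem_sigma, Finset.mem_filter]
      exact ⟨Finset.mem_univ _, (hTmem _ _).2 hval, hnd⟩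
    refine Finset.sum_involution g ?_ ?_ g_mem ?_
    · intro x hx
      obtain ⟨hspec, hval, hnd⟩ := (key x hx).choose_spec
      have hw := gvspec_weight w hspec
      have hsgn := (gvspec_sign hspec).1
      show Equiv.Perm.sign x.1 • ∏ i, pathWeight w (x.2 i)
        + Equiv.Perm.sign ((key x hx).choose).1 •
            ∏ i, pathWeight w (((key x hx).choose).2 i) = 0
      rw [hw, hsgn]
      simp [Units.smul_def]
    · intro x hx _
      obtain ⟨hspec, hval, hnd⟩ := (key x hx).choose_spec
      have := (gvspec_sign hspec).2
      intro heq
      apply this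
      show ((key x hx).choose).1 = (x.1, x.2).1
      rw [show ((key x hx).choose).1 = (g x hx).1 from rfl, heq]
    · intro x hx
      obtain ⟨hspec, hval, hnd⟩ := (key x hx).choose_spec
      obtain ⟨hspec2, hval2, hnd2⟩ := (key (g x hx) (g_mem x hx)).choose_spec
      have hsymm : GVspec ((g x hx).1, (g x hx).2) (x.1, x.2) := by
        have := gvspec_symm (hnodup x hx) hspec
        exact this
      have huniq := gvspec_unique hspec2 hsymm
      have h1 : ((key (g x hx) (g_mem x hx)).choose).1 = x.1 :=
        congrArg Prod.fst huniq
      have h2 : ((key (g x hx) (g_mem x hx)).choose).2 = x.2 :=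
        congrArg Prod.snd huniq
      show (⟨((key (g x hx) (g_mem x hx)).choose).1,
        ((key (g x hx) (g_mem x hx)).choose).2⟩ :
          (_ : Equiv.Perm (Fin p)) × (Fin p → List V)) = x
      rw [h1, h2]
  rw [hzero, add_zero]
  -- only the identity permutation contributes to the disjoint part
  have hid : ∑ σ : Equiv.Perm (Fin p), ∑ F ∈ (T σ).filter Disj,
      Equiv.Perm.sign σ • ∏ i, pathWeight w (F i)
      = ∑ F ∈ (T 1).filter Disj, ∏ i, pathWeight w (F i) := by
    rw [Finset.sum_eq_single (1 : Equiv.Perm (Fin p))]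
    · simp
    · intro σ _ hσ
      have : (T σ).filter Disj = ∅ := by
        rw [Finset.filter_eq_empty_iff]
        intro F hF hD
        exact hσ (honly σ ⟨F, (hTmem σ F).1 hF, hD⟩)
      rw [this, Finset.sum_empty]
    · intro h
      exact absurd (Finset.mem_univ _) h
  rw [hid]
  -- identify the LHS with this finite sum
  have hQfin : {F : Fin p → List V |
      (∀ i, IsDPath adjE (F i) ∧ (F i).head? = some (u i) ∧
        (F i).getLast? = some (v i)) ∧ Disj F}.Finite := by
    refine Set.Finite.subset (Set.Finite.pi (fun i => hfin i i)) ?_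
    intro F hF
    rw [Set.mem_pi]
    intro i _
    exact hF.1 i
  haveI : Fintype {F : Fin p → List V //
      (∀ i, IsDPath adjE (F i) ∧ (F i).head? = some (u i) ∧
        (F i).getLast? = some (v i)) ∧
      (∀ i j, i ≠ j → ∀ a ∈ F i, a ∉ F j)} := hQfin.fintype
  rw [finsum_eq_sum_of_fintype]
  rw [← Finset.sum_subtype ((T 1).filter Disj) ?_ (fun F => ∏ i, pathWeight w (F i))]
  intro F
  rw [Finset.mem_filter, hTmem]
  simp only [Equiv.Perm.one_apply]
  exact Iff.rfl
end

section
/- Let a, b, c, d be integers with a > b and c > d. The sum of 2^{T(P)} over all lattice paths P from (a,b) to (c,d) that never cross above the main diagonal x = y, where T(P) is the number of touching points of P with the main diagonal, equals C(c+d−a−b, c−a) + C(c+d−a−b, d−a). -/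
lemma ch_neg_s9 {n k : ℤ} (h : n < 0) : ch n k = 0 := by
  unfold ch; rw [if_neg]; omega

lemma ch_symm_s9 {n k : ℤ} (h : 0 ≤ n) : ch n (n - k) = ch n k := by
  unfold ch
  by_cases hk : 0 ≤ k ∧ k ≤ n
  · rw [if_pos (by omega), if_pos hk]
    have h1 : (n - k).toNat = n.toNat - k.toNat := by omega
    have h2 : k.toNat ≤ n.toNat := by omega
    rw [h1, Nat.choose_symm h2]
  · rw [if_neg (by omega), if_neg hk]

lemma ch_pascal_s9 {n k : ℤ} (h : 1 ≤ n) : ch n k = ch (n-1) k + ch (n-1) (k-1) := by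
  unfold ch
  by_cases hk0 : 0 ≤ k
  · by_cases hkn : k ≤ n
    · rw [if_pos ⟨hk0, hkn⟩]
      by_cases hk1 : k = 0
      · subst hk1
        rw [if_pos (by omega), if_neg (by omega)]
        simp
      · have hm : n.toNat = (n-1).toNat + 1 := by omega
        have hj : k.toNat = (k-1).toNat + 1 := by omega
        rw [hm, hj, Nat.choose_succ_succ']
        push_cast
        by_cases hke : k ≤ n - 1
        · rw [if_pos (by omega), if_pos (by omega)]
          ring
        · have hkn' : k = n := by omega
          rw [if_neg (by omega), if_pos (by omega)]
          have h2 : (n-1).toNat < (k-1).toNat + 1 := by omega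
          rw [Nat.choose_eq_zero_of_lt h2]
          push_cast; ring
    · rw [if_neg (by omega), if_neg (by omega), if_neg (by omega)]; ring
  · rw [if_neg (by omega), if_neg (by omega), if_neg (by omega)]; ring

def SP (p q : ℤ × ℤ) : Set (List (ℤ × ℤ)) :=
  {L | IsLP L ∧ L.head? = some p ∧ L.getLast? = some q ∧ ∀ r ∈ L, r.2 ≤ r.1}

lemma lp_sum (L : List (ℤ × ℤ))
    (hc : L.Chain' (fun p q => q = (p.1 + 1, p.2) ∨ q = (p.1, p.2 + 1))) :
    ∀ p q : ℤ × ℤ, L.head? = some p → L.getLast? = some q →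
      q.1 + q.2 + 1 = p.1 + p.2 + L.length := by
  induction L with
  | nil => intro p q hp; simp at hp
  | cons a t ih =>
    intro p q hp hq
    simp only [List.head?_cons, Option.some.injEq] at hp
    subst hp
    cases t with
    | nil =>
      simp only [List.getLast?_singleton, Option.some.injEq] at hq
      subst hq; simp
    | cons b l =>
      simp only [List.Chain', List.isChain_cons_cons] at hc
      have := ih hc.2 b q rfl (by rwa [List.getLast?_cons_cons] at hq)
      rcases hc.1 with h | h <;> subst h <;>
        simp only [List.length_cons] at this ⊢ <;> push_cast at this ⊢ <;> omega

lemma mem_decomp {x y : ℤ} {q : ℤ × ℤ} (hne : ((x, y) : ℤ × ℤ) ≠ q) {L : List (ℤ × ℤ)}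
    (hL : L ∈ SP (x, y) q) :
    ∃ t, L = (x, y) :: t ∧ (t ∈ SP (x + 1, y) q ∨ t ∈ SP (x, y + 1) q) := by
  obtain ⟨⟨hnil, hch⟩, hh, hl, hb⟩ := hL
  cases L with
  | nil => exact absurd rfl hnil
  | cons h t =>
    simp only [List.head?_cons, Option.some.injEq] at hh
    subst hh
    cases t with
    | nil => simp only [List.getLast?_singleton, Option.some.injEq] at hl; exact absurd hl hne
    | cons b l =>
      simp only [List.Chain', List.isChain_cons_cons] at hch
      refine ⟨b :: l, rfl, ?_⟩
      rw [List.getLast?_cons_cons] at hl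
      have hbmem : ∀ r ∈ b :: l, r.2 ≤ r.1 := fun r hr => hb r (List.mem_cons_of_mem _ hr)
      rcases hch.1 with h1 | h1
      · left; exact ⟨⟨List.cons_ne_nil _ _, hch.2⟩, by rw [h1]; rfl, hl, hbmem⟩
      · right; exact ⟨⟨List.cons_ne_nil _ _, hch.2⟩, by rw [h1]; rfl, hl, hbmem⟩

lemma mem_cons_lp {x y : ℤ} {q : ℤ × ℤ} (hyx : y ≤ x) {t : List (ℤ × ℤ)}
    (ht : t ∈ SP (x + 1, y) q ∨ t ∈ SP (x, y + 1) q) :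
    ((x, y) :: t) ∈ SP (x, y) q := by
  have key : ∀ (p : ℤ × ℤ), t ∈ SP p q →
      (p = ((x+1 : ℤ), y) ∨ p = ((x : ℤ), y+1)) → ((x, y) :: t) ∈ SP (x, y) q := by
    rintro p ⟨⟨hnil, hch⟩, hh, hl, hb⟩ hp
    cases t with
    | nil => exact absurd rfl hnil
    | cons b l =>
      simp only [List.head?_cons, Option.some.injEq] at hh
      subst hh
      refine ⟨⟨List.cons_ne_nil _ _, ?_⟩, rfl, ?_, ?_⟩
      · simp only [List.Chain', List.isChain_cons_cons]
        exact ⟨by simpa using hp, hch⟩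
      · rw [List.getLast?_cons_cons]; exact hl
      · intro r hr
        rcases List.mem_cons.1 hr with h | h
        · subst h; exact hyx
        · exact hb r h
  rcases ht with h | h
  · exact key _ h (Or.inl rfl)
  · exact key _ h (Or.inr rfl)

lemma SP_empty_above {x y : ℤ} {q : ℤ × ℤ} (h : x < y) : SP (x, y) q = ∅ := by
  ext L
  simp only [Set.mem_empty_iff_false, iff_false]
  rintro ⟨⟨hnil, _⟩, hh, _, hb⟩
  have := hb (x, y) (List.mem_of_mem_head? (by rw [hh]; rfl))
  simp at this; omega

lemma SP_sub_singleton {q : ℤ × ℤ} : SP q q ⊆ {[q]} := by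
  rintro L ⟨⟨hnil, hch⟩, hh, hl, _⟩
  have hlen := lp_sum L hch q q hh hl
  have h1 : L.length = 1 := by omega
  obtain ⟨a, rfl⟩ := List.length_eq_one_iff.1 h1
  simp only [List.head?_cons, Option.some.injEq] at hh
  subst hh; rfl

lemma SP_empty_short {x y : ℤ} {q : ℤ × ℤ} (hne : ((x, y) : ℤ × ℤ) ≠ q)
    (h : q.1 + q.2 ≤ x + y) : SP (x, y) q = ∅ := by
  ext L
  simp only [Set.mem_empty_iff_false, iff_false]
  rintro ⟨⟨hnil, hch⟩, hh, hl, _⟩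
  have hlen := lp_sum L hch _ _ hh hl
  have h1 : L.length = 1 := by
    have : 1 ≤ L.length := List.length_pos_iff.2 hnil
    omega
  obtain ⟨a, rfl⟩ := List.length_eq_one_iff.1 h1
  simp only [List.head?_cons, Option.some.injEq] at hh
  simp only [List.getLast?_singleton, Option.some.injEq] at hl
  subst hh; exact hne hl

lemma SP_finite (q : ℤ × ℤ) (x y : ℤ) : (SP (x, y) q).Finite := by
  by_cases hne : ((x, y) : ℤ × ℤ) = q
  · refine Set.Finite.subset (Set.finite_singleton [q]) ?_
    rw [hne]; exact SP_sub_singleton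
  · by_cases hlen : q.1 + q.2 ≤ x + y
    · rw [SP_empty_short hne hlen]; exact Set.finite_empty
    · have hsub : SP (x, y) q ⊆
          (fun t => (x, y) :: t) '' (SP (x + 1, y) q ∪ SP (x, y + 1) q) := by
        intro L hL
        obtain ⟨t, rfl, ht⟩ := mem_decomp hne hL
        exact ⟨t, ht.imp id id, rfl⟩
      exact Set.Finite.subset
        (Set.Finite.image _ ((SP_finite q (x + 1) y).union (SP_finite q x (y + 1)))) hsub
termination_by (q.1 + q.2 - x - y).toNat
decreasing_by all_goals omega

def wt (L : List (ℤ × ℤ)) : ℤ := 2 ^ (L.countP fun p => decide (p.2 = p.1))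

lemma wt_cons (x y : ℤ) (t : List (ℤ × ℤ)) :
    wt ((x, y) :: t) = (if y = x then 2 else 1) * wt t := by
  unfold wt
  rw [List.countP_cons]
  by_cases h : y = x
  · simp [h, pow_succ, mul_comm]
  · simp [h]

lemma main_sum (c d : ℤ) (hcd : d < c) (x y : ℤ) (hyx : y ≤ x) :
    (∑ᶠ L ∈ SP (x, y) (c, d), wt L)
      = ch (c + d - x - y) (c - x) + ch (c + d - x - y) (d - x) := by
  by_cases hne : ((x, y) : ℤ × ℤ) = (c, d)
  · rw [Prod.mk.injEq] at hne
    obtain ⟨rfl, rfl⟩ := hne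
    have hset : SP ((x : ℤ), (y : ℤ)) (x, y) = {[(x, y)]} := by
      refine Set.Subset.antisymm SP_sub_singleton ?_
      rintro L rfl
      refine ⟨⟨List.cons_ne_nil _ _, List.isChain_singleton _⟩, rfl, rfl, ?_⟩
      intro r hr
      simp only [List.mem_singleton] at hr
      subst hr; exact hyx
    rw [hset, finsum_mem_singleton]
    have hwt : wt [(x, y)] = 1 := by
      unfold wt
      have : ¬ (y = x) := by omega
      simp [List.countP_cons, this]
    rw [hwt]
    unfold ch
    rw [if_pos (by omega), if_neg (by omega)]
    simp
  · by_cases hlen : c + d ≤ x + y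
    · rw [SP_empty_short (by simpa [Prod.mk.injEq] using hne) (by simpa using hlen),
        finsum_mem_empty]
      rw [Prod.mk.injEq] at hne
      unfold ch
      rw [if_neg (by omega), if_neg (by omega)]
      simp
    · -- main inductive step
      push_neg at hlen
      have hn1 : 1 ≤ c + d - x - y := by omega
      have himg : SP (x, y) (c, d)
          = (fun t => (x, y) :: t) '' (SP (x + 1, y) (c, d) ∪ SP (x, y + 1) (c, d)) := by
        refine Set.Subset.antisymm ?_ ?_
        · intro L hL
          obtain ⟨t, rfl, ht⟩ := mem_decomp hne hL
          exact ⟨t, ht.imp id id, rfl⟩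
        · rintro - ⟨t, ht, rfl⟩
          exact mem_cons_lp hyx (ht.imp id id)
      have hinj : Set.InjOn (fun t => ((x, y) : ℤ × ℤ) :: t)
          (SP (x + 1, y) (c, d) ∪ SP (x, y + 1) (c, d)) :=
        (List.cons_injective).injOn
      by_cases hxy : y = x
      · -- diagonal case  y = x
        rw [SP_empty_above (x := x) (y := y + 1) (q := ((c : ℤ), d)) (by omega), Set.union_empty] at himg hinj
        rw [himg, finsum_mem_image hinj]
        have hA := SP_finite ((c : ℤ), d) (x + 1) y
        calc (∑ᶠ t ∈ SP (x + 1, y) (c, d), wt ((x, y) :: t))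
            = ∑ t ∈ hA.toFinset, wt ((x, y) :: t) :=
              finsum_mem_eq_finite_toFinset_sum _ hA
          _ = 2 * ∑ t ∈ hA.toFinset, wt t := by
              rw [Finset.mul_sum]
              refine Finset.sum_congr rfl fun t _ => ?_
              rw [wt_cons, if_pos hxy]
          _ = 2 * ∑ᶠ t ∈ SP (x + 1, y) (c, d), wt t := by
              rw [finsum_mem_eq_finite_toFinset_sum _ hA]
          _ = ch (c + d - x - y) (c - x) + ch (c + d - x - y) (d - x) := by
              rw [main_sum c d hcd (x + 1) y (by omega)]
              have e1 : c + d - (x + 1) - y = (c + d - x - y) - 1 := by ring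
              have e2 : c - (x + 1) = c - x - 1 := by ring
              have e3 : d - (x + 1) = d - x - 1 := by ring
              rw [e1, e2, e3]
              set n := c + d - x - y with hn
              have s1 : ch (n - 1) (d - x - 1) = ch (n - 1) (c - x) := by
                rw [← ch_symm_s9 (k := c - x) (by omega)]
                congr 1
                omega
              have s2 : ch (n - 1) (c - x - 1) = ch (n - 1) (d - x) := by
                rw [← ch_symm_s9 (k := d - x) (by omega)]
                congr 1
                omega
              have p1 := ch_pascal_s9 (k := c - x) hn1
              have p2 := ch_pascal_s9 (k := d - x) hn1
              linarith
      · -- strictly below diagonal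
        have hlt : y < x := lt_of_le_of_ne hyx hxy
        rw [himg, finsum_mem_image hinj]
        have hdisj : Disjoint (SP (x + 1, y) ((c : ℤ), d)) (SP (x, y + 1) (c, d)) := by
          rw [Set.disjoint_left]
          rintro t ⟨_, h1, _⟩ ⟨_, h2, _⟩
          rw [h1] at h2
          simp only [Option.some.injEq, Prod.mk.injEq] at h2
          omega
        rw [finsum_mem_union hdisj (SP_finite _ _ _) (SP_finite _ _ _)]
        have hwt : ∀ t : List (ℤ × ℤ), wt ((x, y) :: t) = wt t := by
          intro t
          rw [wt_cons, if_neg (by omega), one_mul]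
        simp only [hwt]
        rw [main_sum c d hcd (x + 1) y (by omega), main_sum c d hcd x (y + 1) (by omega)]
        have e1 : c + d - (x + 1) - y = (c + d - x - y) - 1 := by ring
        have e2 : c - (x + 1) = c - x - 1 := by ring
        have e3 : d - (x + 1) = d - x - 1 := by ring
        have e4 : c + d - x - (y + 1) = (c + d - x - y) - 1 := by ring
        rw [e1, e2, e3, e4]
        set n := c + d - x - y with hn
        have p1 := ch_pascal_s9 (k := c - x) hn1
        have p2 := ch_pascal_s9 (k := d - x) hn1
        linarith
termination_by (c + d - x - y).toNat
decreasing_by all_goals omega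

/-- The reflection argument in the proof of Proposition 3.4: for integers `a > b` and
`c > d`, the sum of `2^(number of touchings of the main diagonal)` over all lattice
paths from `(a, b)` to `(c, d)` staying weakly below the main diagonal `x = y` equals
`C(c+d-a-b, c-a) + C(c+d-a-b, d-a)`. -/
theorem subdiagonal_weighted_path_count (a b c d : ℤ) (hab : b < a) (hcd : d < c) :
    ∑ᶠ P : {L : List (ℤ × ℤ) // IsLP L ∧ L.head? = some (a, b) ∧
        L.getLast? = some (c, d) ∧ ∀ p ∈ L, p.2 ≤ p.1},
      (2 : ℤ) ^ (P.1.countP (fun p => decide (p.2 = p.1)))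
    = ch (c + d - a - b) (c - a) + ch (c + d - a - b) (d - a) := by
  have h := main_sum c d hcd a b (le_of_lt hab)
  rw [← h]
  exact finsum_subtype_eq_finsum_cond (f := wt) _
end

section
/- Let d be a positive integer, R a commutative ring, D an arbitrary d × d matrix over R, and E a skew-symmetric d × d matrix over R. Then the Pfaffian of the skew-symmetric 2d × 2d block matrix [[0, D], [−Dᵀ, E]] equals (−1)^{C(d,2)} det(D). -/
/-- Number of crossings of the perfect matching given by the involution `f`:
quadruples `i < j < f i < f j` (i.e. `i` matched with `f i`, `j` with `f j`, crossing). -/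
def pfCrossings {N : ℕ} (f : Equiv.Perm (Fin N)) : ℕ :=
  (Finset.univ.filter (fun q : Fin N × Fin N =>
      q.1 < q.2 ∧ q.2 < f q.1 ∧ f q.1 < f q.2)).card

/-- The Pfaffian of a `2N × 2N` matrix, defined as the sum over all perfect matchings
(encoded as fixed-point-free involutions) of the sign `(-1)^(number of crossings)` times
the product of the entries `A i (f i)` over matched pairs `i < f i`. -/
def pfaffian {N : ℕ} {R : Type*} [CommRing R] (A : Matrix (Fin (2 * N)) (Fin (2 * N)) R) : R :=
  ∑ f ∈ Finset.univ.filter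
      (fun f : Equiv.Perm (Fin (2 * N)) => (∀ i, f (f i) = i) ∧ ∀ i, f i ≠ i),
    (-1 : R) ^ pfCrossings f *
      ∏ i ∈ Finset.univ.filter (fun i => i < f i), A i (f i)

/-- The skew-symmetric block matrix `[[0, D], [-Dᵀ, E]]` on `Fin (2d)`. -/
def blockMat {R : Type*} [CommRing R] {d : ℕ} (D E : Matrix (Fin d) (Fin d) R) :
    Matrix (Fin (2 * d)) (Fin (2 * d)) R :=
  fun p q =>
    if hp : (p : ℕ) < d then
      if hq : (q : ℕ) < d then 0
      else D ⟨p, hp⟩ ⟨(q : ℕ) - d, by have := q.isLt; omega⟩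
    else
      if hq : (q : ℕ) < d then
        -D ⟨q, hq⟩ ⟨(p : ℕ) - d, by have := p.isLt; omega⟩
      else E ⟨(p : ℕ) - d, by have := p.isLt; omega⟩ ⟨(q : ℕ) - d, by have := q.isLt; omega⟩

namespace PfBlockAux

open Finset Equiv

variable {d : ℕ}

/-- The underlying function of the big involution associated to `σ`. -/
def gfun (σ : Perm (Fin d)) (x : Fin (2 * d)) : Fin (2 * d) :=
  if h : (x : ℕ) < d then
    ⟨d + (σ ⟨x, h⟩ : ℕ), by have := (σ ⟨x, h⟩).isLt; omega⟩
  else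
    ⟨(σ⁻¹ ⟨(x : ℕ) - d, by have := x.isLt; omega⟩ : ℕ),
      lt_of_lt_of_le (Fin.isLt _) (by omega)⟩

lemma gfun_val_lt (σ : Perm (Fin d)) {x : Fin (2 * d)} (h : (x : ℕ) < d) :
    (gfun σ x : ℕ) = d + (σ ⟨x, h⟩ : ℕ) := by
  simp [gfun, h]

lemma gfun_val_ge (σ : Perm (Fin d)) {x : Fin (2 * d)} (h : ¬ (x : ℕ) < d)
    (h2 : (x : ℕ) - d < d) :
    (gfun σ x : ℕ) = (σ⁻¹ ⟨(x : ℕ) - d, h2⟩ : ℕ) := by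
  simp [gfun, h]

lemma gfun_invol (σ : Perm (Fin d)) : Function.Involutive (gfun σ) := by
  intro x
  by_cases h : (x : ℕ) < d
  · have hv := gfun_val_lt σ h
    have h2 : ¬ (gfun σ x : ℕ) < d := by omega
    have h3 : (gfun σ x : ℕ) - d < d := by have := (σ ⟨x, h⟩).isLt; omega
    apply Fin.ext
    rw [gfun_val_ge σ h2 h3]
    have harg : (⟨(gfun σ x : ℕ) - d, h3⟩ : Fin d) = σ ⟨x, h⟩ :=
      Fin.ext (by simp only [Fin.val_mk]; omega)
    rw [harg, Equiv.Perm.inv_def, Equiv.symm_apply_apply]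
  · have h2 : (x : ℕ) - d < d := by have := x.isLt; omega
    have hv := gfun_val_ge σ h h2
    have h3 : (gfun σ x : ℕ) < d := by rw [hv]; exact Fin.isLt _
    apply Fin.ext
    rw [gfun_val_lt σ h3]
    have harg : (⟨(gfun σ x : ℕ), h3⟩ : Fin d) = σ⁻¹ ⟨(x : ℕ) - d, h2⟩ :=
      Fin.ext (by simp only [Fin.val_mk]; omega)
    rw [harg, Equiv.Perm.inv_def, Equiv.apply_symm_apply]
    simp only [Fin.val_mk]
    omega

/-- The big involution in `Perm (Fin (2d))` associated to `σ : Perm (Fin d)`. -/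
def g (σ : Perm (Fin d)) : Perm (Fin (2 * d)) := (gfun_invol σ).toPerm

lemma g_apply (σ : Perm (Fin d)) (x : Fin (2 * d)) : g σ x = gfun σ x := rfl

lemma g_val_lt (σ : Perm (Fin d)) {x : Fin (2 * d)} (h : (x : ℕ) < d) :
    (g σ x : ℕ) = d + (σ ⟨x, h⟩ : ℕ) := gfun_val_lt σ h

lemma g_val_ge (σ : Perm (Fin d)) {x : Fin (2 * d)} (h : ¬ (x : ℕ) < d)
    (h2 : (x : ℕ) - d < d) :
    (g σ x : ℕ) = (σ⁻¹ ⟨(x : ℕ) - d, h2⟩ : ℕ) := gfun_val_ge σ h h2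

lemma g_injective : Function.Injective (g (d := d)) := by
  intro σ τ h
  apply Equiv.ext
  intro j
  have hj2 : ((j : ℕ)) < 2 * d := by have := j.isLt; omega
  have := congrArg (fun p : Perm (Fin (2 * d)) => (p ⟨(j : ℕ), hj2⟩ : ℕ)) h
  rw [g_val_lt σ (by simpa using j.isLt), g_val_lt τ (by simpa using j.isLt)] at this
  have hj : (⟨((⟨(j : ℕ), hj2⟩ : Fin (2 * d)) : ℕ), by simpa using j.isLt⟩ : Fin d) = j :=
    Fin.ext rfl
  rw [hj] at this
  exact Fin.ext (by omega)


/-- Number of inversions of `σ`. -/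
def invCount {n : ℕ} (σ : Perm (Fin n)) : ℕ :=
  (Finset.univ.filter (fun q : Fin n × Fin n => q.1 < q.2 ∧ σ q.2 < σ q.1)).card

/-- Number of non-inversions of `σ`. -/
def crossCount {n : ℕ} (σ : Perm (Fin n)) : ℕ :=
  (Finset.univ.filter (fun q : Fin n × Fin n => q.1 < q.2 ∧ σ q.1 < σ q.2)).card

lemma sign_eq_signAux {n : ℕ} (σ : Perm (Fin n)) :
    Equiv.Perm.sign σ = Equiv.Perm.signAux σ := by
  refine Equiv.Perm.swap_induction_on σ (by simp) ?_
  intro f x y hxy ih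
  rw [Equiv.Perm.signAux_mul, Equiv.Perm.sign_mul, ih,
    Equiv.Perm.signAux_swap hxy, Equiv.Perm.sign_swap hxy]

lemma signAux_eq_pow {n : ℕ} (σ : Perm (Fin n)) :
    Equiv.Perm.signAux σ = (-1 : ℤˣ) ^ invCount σ := by
  unfold Equiv.Perm.signAux
  rw [Finset.prod_ite (fun _ => (-1 : ℤˣ)) (fun _ => (1 : ℤˣ)),
    Finset.prod_const, Finset.prod_const_one, mul_one]
  congr 1
  refine Finset.card_nbij' (fun x => (x.2, x.1)) (fun q => ⟨q.2, q.1⟩) ?_ ?_ ?_ ?_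
  · intro a ha
    rw [Finset.mem_coe, Finset.mem_filter, Equiv.Perm.mem_finPairsLT] at ha
    rw [Finset.mem_coe, Finset.mem_filter]
    refine ⟨Finset.mem_univ _, ha.1, lt_of_le_of_ne ha.2 ?_⟩
    exact fun hc => (ne_of_gt ha.1) (σ.injective hc)
  · intro a ha
    rw [Finset.mem_coe, Finset.mem_filter] at ha
    rw [Finset.mem_coe, Finset.mem_filter, Equiv.Perm.mem_finPairsLT]
    exact ⟨ha.2.1, le_of_lt ha.2.2⟩
  · intro a _; rfl
  · intro a _; rfl

lemma sign_cast_eq_pow {n : ℕ} {R : Type*} [CommRing R] (σ : Perm (Fin n)) :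
    ((Equiv.Perm.sign σ : ℤ) : R) = (-1 : R) ^ invCount σ := by
  rw [sign_eq_signAux, signAux_eq_pow]
  push_cast
  rfl

lemma cross_add_inv (n : ℕ) (σ : Perm (Fin n)) :
    crossCount σ + invCount σ =
      (Finset.univ.filter (fun q : Fin n × Fin n => q.1 < q.2)).card := by
  unfold crossCount invCount
  rw [← Finset.card_union_of_disjoint, ← Finset.filter_or]
  · congr 1
    apply Finset.filter_congr
    intro q _
    constructor
    · rintro (⟨h, _⟩ | ⟨h, _⟩) <;> exact h
    · intro h
      rcases lt_or_gt_of_ne (fun hc : σ q.1 = σ q.2 => (ne_of_lt h) (σ.injective hc)) with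
        h2 | h2
      · exact Or.inl ⟨h, h2⟩
      · exact Or.inr ⟨h, h2⟩
  · rw [Finset.disjoint_left]
    intro q hq hq'
    rw [Finset.mem_filter] at hq hq'
    exact absurd hq'.2.2 (not_lt_of_gt hq.2.2)

lemma card_lt_pairs (n : ℕ) :
    (Finset.univ.filter (fun q : Fin n × Fin n => q.1 < q.2)).card = n.choose 2 := by
  have hsymm : (Finset.univ.filter (fun q : Fin n × Fin n => q.1 < q.2)).card =
      (Finset.univ.filter (fun q : Fin n × Fin n => q.2 < q.1)).card := by
    refine Finset.card_nbij' (fun q => (q.2, q.1)) (fun q => (q.2, q.1)) ?_ ?_ ?_ ?_ <;>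
      simp +contextual [Finset.mem_filter, Set.MapsTo, Set.LeftInvOn, Set.RightInvOn, Set.InvOn]
  have hunion : (Finset.univ.filter (fun q : Fin n × Fin n => q.1 < q.2)).card +
      (Finset.univ.filter (fun q : Fin n × Fin n => q.2 < q.1)).card =
      (Finset.univ : Finset (Fin n)).offDiag.card := by
    rw [← Finset.card_union_of_disjoint, ← Finset.filter_or]
    · congr 1
      ext q
      simp only [Finset.mem_filter, Finset.mem_univ, true_and, Finset.mem_offDiag]
      constructor
      · rintro (h | h)
        exacts [ne_of_lt h, ne_of_gt h]
      · intro h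
        exact lt_or_gt_of_ne h
    · rw [Finset.disjoint_left]
      intro q hq hq'
      rw [Finset.mem_filter] at hq hq'
      exact absurd hq'.2 (not_lt_of_gt hq.2)
  rw [Finset.offDiag_card] at hunion
  simp only [Finset.card_univ, Fintype.card_fin] at hunion
  rw [Nat.choose_two_right]
  have h4 : n * (n - 1) = n * n - n := by
    rcases n with _ | m
    · simp
    · have e : (m + 1) * (m + 1) = (m + 1) * m + (m + 1) := by ring
      simp only [Nat.add_sub_cancel]
      omega
  rw [h4]
  omega


lemma mem_big_bounds (σ : Perm (Fin d)) {q : Fin (2 * d) × Fin (2 * d)}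
    (h12 : q.1 < q.2) (h2g1 : q.2 < g σ q.1) (hg12 : g σ q.1 < g σ q.2) :
    (q.1 : ℕ) < d ∧ (q.2 : ℕ) < d := by
  rw [Fin.lt_def] at h12 h2g1 hg12
  have hq1 : (q.1 : ℕ) < d := by
    by_contra h
    have h2 : (q.1 : ℕ) - d < d := by have := q.1.isLt; omega
    have hv := g_val_ge σ h h2
    have hlt := (σ⁻¹ ⟨(q.1 : ℕ) - d, h2⟩).isLt
    omega
  refine ⟨hq1, ?_⟩
  by_contra h
  have h2 : (q.2 : ℕ) - d < d := by have := q.2.isLt; omega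
  have hv2 := g_val_ge σ h h2
  have hlt := (σ⁻¹ ⟨(q.2 : ℕ) - d, h2⟩).isLt
  have hv1 := g_val_lt σ hq1
  omega

lemma crossings_eq (hd : 0 < d) (σ : Perm (Fin d)) : pfCrossings (g σ) = crossCount σ := by
  unfold pfCrossings crossCount
  refine Finset.card_nbij'
    (fun q => (⟨(q.1 : ℕ) % d, Nat.mod_lt _ hd⟩, ⟨(q.2 : ℕ) % d, Nat.mod_lt _ hd⟩))
    (fun q => (⟨(q.1 : ℕ), by have := q.1.isLt; omega⟩, ⟨(q.2 : ℕ), by have := q.2.isLt; omega⟩))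
    ?_ ?_ ?_ ?_
  · intro q hq
    simp only [Finset.mem_coe, Finset.mem_filter, Finset.mem_univ, true_and] at hq ⊢
    obtain ⟨h12, h2g1, hg12⟩ := hq
    obtain ⟨hq1, hq2⟩ := mem_big_bounds σ h12 h2g1 hg12
    have e1 : (⟨(q.1 : ℕ) % d, Nat.mod_lt _ hd⟩ : Fin d) = ⟨(q.1 : ℕ), hq1⟩ :=
      Fin.ext (Nat.mod_eq_of_lt hq1)
    have e2 : (⟨(q.2 : ℕ) % d, Nat.mod_lt _ hd⟩ : Fin d) = ⟨(q.2 : ℕ), hq2⟩ :=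
      Fin.ext (Nat.mod_eq_of_lt hq2)
    rw [e1, e2]
    have hv1 := g_val_lt σ hq1
    have hv2 := g_val_lt σ hq2
    rw [Fin.lt_def] at h12 hg12 ⊢
    constructor
    · simp only [Fin.val_mk]
      omega
    · rw [Fin.lt_def]
      omega
  · intro q hq
    simp only [Finset.mem_coe, Finset.mem_filter, Finset.mem_univ, true_and] at hq ⊢
    obtain ⟨h12, hs12⟩ := hq
    have hb1 : ((⟨(q.1 : ℕ), by have := q.1.isLt; omega⟩ : Fin (2 * d)) : ℕ) < d := q.1.isLt
    have hb2 : ((⟨(q.2 : ℕ), by have := q.2.isLt; omega⟩ : Fin (2 * d)) : ℕ) < d := q.2.isLt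
    have hv1 := g_val_lt σ hb1
    have hv2 := g_val_lt σ hb2
    have e1 : (⟨((⟨(q.1 : ℕ), by have := q.1.isLt; omega⟩ : Fin (2 * d)) : ℕ), hb1⟩ : Fin d)
        = q.1 := Fin.ext rfl
    have e2 : (⟨((⟨(q.2 : ℕ), by have := q.2.isLt; omega⟩ : Fin (2 * d)) : ℕ), hb2⟩ : Fin d)
        = q.2 := Fin.ext rfl
    rw [e1] at hv1
    rw [e2] at hv2
    rw [Fin.lt_def] at h12 hs12
    refine ⟨?_, ?_, ?_⟩ <;> rw [Fin.lt_def] <;> (try simp only [Fin.val_mk]) <;> omega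
  · intro q hq
    simp only [Finset.mem_coe, Finset.mem_filter, Finset.mem_univ, true_and] at hq
    obtain ⟨h12, h2g1, hg12⟩ := hq
    obtain ⟨hq1, hq2⟩ := mem_big_bounds σ h12 h2g1 hg12
    refine Prod.ext (Fin.ext ?_) (Fin.ext ?_) <;> simp only [Fin.val_mk] <;>
      first
      | exact Nat.mod_eq_of_lt hq1
      | exact Nat.mod_eq_of_lt hq2
  · intro q hq
    refine Prod.ext (Fin.ext ?_) (Fin.ext ?_) <;> simp only [Fin.val_mk] <;>
      first
      | exact Nat.mod_eq_of_lt q.1.isLt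
      | exact Nat.mod_eq_of_lt q.2.isLt


lemma g_no_fixed (σ : Perm (Fin d)) (i : Fin (2 * d)) : g σ i ≠ i := by
  intro h
  have hv := congrArg Fin.val h
  by_cases hi : (i : ℕ) < d
  · rw [g_val_lt σ hi] at hv
    omega
  · have h2 : (i : ℕ) - d < d := by have := i.isLt; omega
    rw [g_val_ge σ hi h2] at hv
    have := (σ⁻¹ ⟨(i : ℕ) - d, h2⟩).isLt
    omega

/-- The embedding of `Fin d` into the first block of `Fin (2d)`. -/
def embFin (d : ℕ) : Fin d ↪ Fin (2 * d) :=
  ⟨fun j => ⟨(j : ℕ), by have := j.isLt; omega⟩, fun a b h => by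
    have hv := congrArg Fin.val h
    exact Fin.ext hv⟩

lemma filter_lt_eq (σ : Perm (Fin d)) :
    (Finset.univ.filter (fun i : Fin (2 * d) => i < g σ i)) = Finset.univ.map (embFin d) := by
  ext x
  simp only [Finset.mem_filter, Finset.mem_univ, true_and, Finset.mem_map]
  constructor
  · intro h
    have hx : (x : ℕ) < d := by
      by_contra hc
      have h2 : (x : ℕ) - d < d := by have := x.isLt; omega
      have hv := g_val_ge σ hc h2
      have := (σ⁻¹ ⟨(x : ℕ) - d, h2⟩).isLt
      rw [Fin.lt_def] at h
      omega
    exact ⟨⟨(x : ℕ), hx⟩, Fin.ext rfl⟩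
  · rintro ⟨j, -, rfl⟩
    have hb : ((embFin d j : Fin (2 * d)) : ℕ) < d := j.isLt
    have hv := g_val_lt σ hb
    rw [Fin.lt_def]
    have := (σ ⟨((embFin d j : Fin (2 * d)) : ℕ), hb⟩).isLt
    omega

lemma block_entry {R : Type*} [CommRing R] (D E : Matrix (Fin d) (Fin d) R)
    (σ : Perm (Fin d)) (x : Fin (2 * d)) (hb : (x : ℕ) < d) :
    blockMat D E x (g σ x) = D ⟨(x : ℕ), hb⟩ (σ ⟨(x : ℕ), hb⟩) := by
  have hv := g_val_lt σ hb
  have hgd : ¬ ((g σ x : Fin (2 * d)) : ℕ) < d := by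
    have := (σ ⟨(x : ℕ), hb⟩).isLt
    omega
  unfold blockMat
  rw [dif_pos hb, dif_neg hgd]
  congr 1
  exact Fin.ext (by simp only [Fin.val_mk]; omega)

lemma term_zero {R : Type*} [CommRing R] (D E : Matrix (Fin d) (Fin d) R)
    (f : Perm (Fin (2 * d)))
    (hf1 : ∀ i, f (f i) = i) (hf2 : ∀ i, f i ≠ i)
    (hnot : ∀ σ : Perm (Fin d), g σ ≠ f) :
    ∏ i ∈ Finset.univ.filter (fun i => i < f i), blockMat D E i (f i) = 0 := by
  have hjlt : ∀ j : Fin d, ((j : ℕ)) < 2 * d := fun j => by have := j.isLt; omega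
  have hex : ∃ x : Fin (2 * d), (x : ℕ) < d ∧ ((f x : Fin (2 * d)) : ℕ) < d := by
    by_contra hcon
    push_neg at hcon
    set s : Fin d → Fin d := fun j =>
      ⟨((f ⟨(j : ℕ), hjlt j⟩ : Fin (2 * d)) : ℕ) - d, by
        have h1 := hcon ⟨(j : ℕ), hjlt j⟩ j.isLt
        have := (f ⟨(j : ℕ), hjlt j⟩).isLt
        omega⟩ with hs
    have hinj : Function.Injective s := by
      intro a b hab
      have h1 := hcon ⟨(a : ℕ), hjlt a⟩ a.isLt
      have h2 := hcon ⟨(b : ℕ), hjlt b⟩ b.isLt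
      have hval := congrArg Fin.val hab
      simp only [hs, Fin.val_mk] at hval
      have heq : f ⟨(a : ℕ), hjlt a⟩ = f ⟨(b : ℕ), hjlt b⟩ := Fin.ext (by omega)
      have hv2 := congrArg Fin.val (f.injective heq)
      exact Fin.ext hv2
    have hbij := Finite.injective_iff_bijective.mp hinj
    set σ : Perm (Fin d) := Equiv.ofBijective s hbij with hσ
    apply hnot σ
    apply Equiv.ext
    intro x
    by_cases hx : (x : ℕ) < d
    · apply Fin.ext
      have hv := g_val_lt σ hx
      have hge := hcon x hx
      have hsv : (σ ⟨(x : ℕ), hx⟩ : ℕ) = ((f x : Fin (2 * d)) : ℕ) - d := by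
        have hxx : (⟨((⟨(x : ℕ), hx⟩ : Fin d) : ℕ), hjlt ⟨(x : ℕ), hx⟩⟩ : Fin (2 * d)) = x :=
          Fin.ext rfl
        show (s ⟨(x : ℕ), hx⟩ : ℕ) = _
        simp only [hs, Fin.val_mk]
        try rw [hxx]
        try rfl
      have := x.isLt
      omega
    · apply Fin.ext
      have h2 : (x : ℕ) - d < d := by have := x.isLt; omega
      have hv := g_val_ge σ hx h2
      obtain ⟨j, hj⟩ := hbij.surjective ⟨(x : ℕ) - d, h2⟩
      have hfj : f ⟨(j : ℕ), hjlt j⟩ = x := by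
        apply Fin.ext
        have h3 := hcon ⟨(j : ℕ), hjlt j⟩ j.isLt
        have hval := congrArg Fin.val hj
        simp only [hs, Fin.val_mk] at hval
        omega
      have hfx : f x = ⟨(j : ℕ), hjlt j⟩ := by rw [← hfj, hf1]
      have hinv : σ⁻¹ ⟨(x : ℕ) - d, h2⟩ = j := by
        have : σ j = ⟨(x : ℕ) - d, h2⟩ := hj
        rw [← this, Equiv.Perm.inv_def, Equiv.symm_apply_apply]
      rw [hv, hfx, hinv]
  obtain ⟨x, hx1, hx2⟩ := hex
  have hfi : ∃ i : Fin (2 * d), (i : ℕ) < d ∧ ((f i : Fin (2 * d)) : ℕ) < d ∧ i < f i := by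
    rcases lt_or_gt_of_ne (hf2 x).symm with h | h
    · exact ⟨x, hx1, hx2, h⟩
    · refine ⟨f x, hx2, ?_, ?_⟩
      · rw [hf1]; exact hx1
      · rw [hf1]; exact h
  obtain ⟨i, hi1, hi2, hlt⟩ := hfi
  have hz : blockMat D E i (f i) = 0 := by
    unfold blockMat
    rw [dif_pos hi1, dif_pos hi2]
  exact Finset.prod_eq_zero (Finset.mem_filter.mpr ⟨Finset.mem_univ i, hlt⟩) hz

end PfBlockAux

section
open PfBlockAux

/-- The Pfaffian identity used in the proof of Lemma 4.1: for any `d × d` matrix `D`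
and any skew-symmetric `d × d` matrix `E`,
`Pf [[0, D], [-Dᵀ, E]] = (-1)^(d choose 2) det D`. -/
theorem pfaffian_block (d : ℕ) (hd : 0 < d) {R : Type*} [CommRing R]
    (D E : Matrix (Fin d) (Fin d) R) (hE : ∀ i j, E j i = -E i j) :
    pfaffian (blockMat D E) = (-1 : R) ^ d.choose 2 * D.det := by
  classical
  unfold pfaffian
  have hsub : (Finset.univ.map
        (⟨g, g_injective⟩ : Equiv.Perm (Fin d) ↪ Equiv.Perm (Fin (2 * d)))) ⊆
      Finset.univ.filter
        (fun f : Equiv.Perm (Fin (2 * d)) => (∀ i, f (f i) = i) ∧ ∀ i, f i ≠ i) := by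
    intro f hf
    rw [Finset.mem_map] at hf
    obtain ⟨σ, -, rfl⟩ := hf
    exact Finset.mem_filter.mpr
      ⟨Finset.mem_univ _, fun i => gfun_invol σ i, fun i => g_no_fixed σ i⟩
  have hzero : ∀ f ∈ Finset.univ.filter
      (fun f : Equiv.Perm (Fin (2 * d)) => (∀ i, f (f i) = i) ∧ ∀ i, f i ≠ i),
      f ∉ Finset.univ.map (⟨g, g_injective⟩ : Equiv.Perm (Fin d) ↪ Equiv.Perm (Fin (2 * d))) →
      (-1 : R) ^ pfCrossings f *
        ∏ i ∈ Finset.univ.filter (fun i => i < f i), blockMat D E i (f i) = 0 := by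
    intro f hf hfn
    rw [Finset.mem_filter] at hf
    obtain ⟨-, hf1, hf2⟩ := hf
    have hnot : ∀ σ : Equiv.Perm (Fin d), g σ ≠ f := fun σ hc =>
      hfn (Finset.mem_map.mpr ⟨σ, Finset.mem_univ _, hc⟩)
    rw [term_zero D E f hf1 hf2 hnot, mul_zero]
  rw [← Finset.sum_subset hsub hzero, Finset.sum_map]
  simp only [Function.Embedding.coeFn_mk]
  have hterm : ∀ σ : Equiv.Perm (Fin d),
      (-1 : R) ^ pfCrossings (g σ) *
        ∏ i ∈ Finset.univ.filter (fun i => i < g σ i), blockMat D E i (g σ i)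
      = (-1 : R) ^ d.choose 2 * (((Equiv.Perm.sign σ : ℤ) : R) * ∏ j, D j (σ j)) := by
    intro σ
    have hsum := cross_add_inv d σ
    rw [card_lt_pairs] at hsum
    have key : (-1 : R) ^ crossCount σ = (-1 : R) ^ d.choose 2 * (-1 : R) ^ invCount σ := by
      have h1 : (-1 : R) ^ d.choose 2 = (-1 : R) ^ crossCount σ * (-1 : R) ^ invCount σ := by
        rw [← pow_add, hsum]
      have h2 : (-1 : R) ^ invCount σ * (-1 : R) ^ invCount σ = 1 := by
        rw [← pow_add, ← two_mul, pow_mul]; norm_num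
      rw [h1, mul_assoc, h2, mul_one]
    have hprod : ∏ i ∈ Finset.univ.filter (fun i => i < g σ i), blockMat D E i (g σ i)
        = ∏ j, D j (σ j) := by
      rw [filter_lt_eq σ, Finset.prod_map]
      apply Finset.prod_congr rfl
      intro j _
      have hb : ((embFin d j : Fin (2 * d)) : ℕ) < d := j.isLt
      have he : (⟨((embFin d j : Fin (2 * d)) : ℕ), hb⟩ : Fin d) = j := Fin.ext rfl
      rw [block_entry D E σ (embFin d j) hb, he]
    rw [crossings_eq hd σ, hprod, sign_cast_eq_pow (R := R) σ, key, mul_assoc]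
  rw [Finset.sum_congr rfl (fun σ _ => hterm σ), ← Finset.mul_sum]
  congr 1
  rw [← Matrix.det_transpose D, Matrix.det_apply']
  apply Finset.sum_congr rfl
  intro σ _
  simp [Matrix.transpose_apply]

end
end
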